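/- arXiv:2508.10744 — 5 statements merged into one kernel-verified Lean document; each statement's English description precedes it below -/
import Mathlib

section
/- Let m > 0 and let w : ℝ × ℝ³ × ℝ³ → ℝ be differentiable and rotation invariant in its last two arguments: w(r, Qν₁, Qν₂) = w(r, ν₁, ν₂) for every Q ∈ SO(3), r ∈ ℝ, ν₁, ν₂ ∈ ℝ³. Define W(y₁, y₂, ν₁, ν₂) = w(‖y₁ − y₂‖², ν₁, ν₂). Suppose x₁, x₂, ν₁, ν₂ : ℝ → ℝ³ are twice differentiable and satisfy m xᵢ''(t) = −∇_{yᵢ}W and νᵢ''(t) = −∇_{νᵢ}W evaluated along the trajectory, for i = 1, 2 and all t. Then the total angular momentum t ↦ x₁(t) × (m x₁'(t)) + x₂(t) × (m x₂'(t)) + ν₁(t) × ν₁'(t) + ν₂(t) × ν₂'(t) is constant. -/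
open Matrix

/-- The cross product on `EuclideanSpace ℝ (Fin 3)`. -/
noncomputable def ecross (a b : EuclideanSpace ℝ (Fin 3)) : EuclideanSpace ℝ (Fin 3) :=
  WithLp.toLp 2 (crossProduct (a : Fin 3 → ℝ) (b : Fin 3 → ℝ))

namespace TwoBodyAux

open RealInnerProductSpace

noncomputable abbrev E3 := EuclideanSpace ℝ (Fin 3)

noncomputable def ecrossl : E3 →ₗ[ℝ] E3 →ₗ[ℝ] E3 :=
  ((crossProduct.compl₁₂ (WithLp.linearEquiv 2 ℝ (Fin 3 → ℝ)).toLinearMap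
    (WithLp.linearEquiv 2 ℝ (Fin 3 → ℝ)).toLinearMap).compr₂
    (WithLp.linearEquiv 2 ℝ (Fin 3 → ℝ)).symm.toLinearMap)

noncomputable def ecrossCLM : E3 →L[ℝ] E3 →L[ℝ] E3 :=
  LinearMap.toContinuousLinearMap
    ((LinearMap.toContinuousLinearMap : (E3 →ₗ[ℝ] E3) ≃ₗ[ℝ] (E3 →L[ℝ] E3)).toLinearMap ∘ₗ ecrossl)

lemma hasDerivAt_ecross {f g : ℝ → E3} {f' g' : E3} {t : ℝ}
    (hf : HasDerivAt f f' t) (hg : HasDerivAt g g' t) :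
    HasDerivAt (fun τ => ecross (f τ) (g τ)) (ecross f' (g t) + ecross (f t) g') t := by
  have h1 : HasDerivAt (fun τ => ecrossCLM (f τ)) (ecrossCLM f') t :=
    (ecrossCLM.hasFDerivAt.comp_hasDerivAt t hf)
  exact h1.clm_apply hg

lemma ecross_smul_self (c : ℝ) (a : E3) : ecross a (c • a) = 0 := by
  show WithLp.toLp 2 ((crossProduct (a : Fin 3 → ℝ)) (c • (a : Fin 3 → ℝ))) = 0
  rw [LinearMap.map_smul, cross_self, smul_zero]; rfl

lemma ecross_self (a : E3) : ecross a a = 0 := by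
  simpa using ecross_smul_self 1 a

lemma ecross_neg (a b : E3) : ecross a (-b) = - ecross a b := by
  show WithLp.toLp 2 ((crossProduct (a : Fin 3 → ℝ)) (-(b : Fin 3 → ℝ))) = _
  rw [LinearMap.map_neg]; rfl

lemma ecross_cancel (k : ℝ) (a b : E3) :
    ecross a (k • (a - b)) + ecross b (k • (b - a)) = 0 := by
  ext i
  fin_cases i <;>
    simp [ecross, crossProduct, PiLp.smul_apply, PiLp.sub_apply, PiLp.add_apply,
      PiLp.zero_apply, smul_eq_mul] <;> ring

lemma ecross_apply_eq (a b : E3) (i : Fin 3) :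
    ecross a b i = ⟪b, ecross (EuclideanSpace.single i (1:ℝ)) a⟫ := by
  fin_cases i <;>
    simp [ecross, crossProduct, PiLp.inner_apply, Fin.sum_univ_three,
      EuclideanSpace.single_apply] <;> ring

lemma grad_inner {f : E3 → ℝ} {L : E3 →L[ℝ] ℝ} {a : E3} (h : HasFDerivAt f L a) (v : E3) :
    ⟪gradient f a, v⟫ = L v := by
  have h2 : HasGradientAt f (gradient f a) a := h.differentiableAt.hasGradientAt
  have h3 := (h2.hasFDerivAt.unique h)
  have := congrFun (congrArg DFunLike.coe h3) v
  simpa [InnerProductSpace.toDual_apply_apply] using this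

lemma hasFDerivAt_normsq (b a : E3) : HasFDerivAt (fun y : E3 => ‖y - b‖ ^ 2)
    ((2:ℝ) • (innerSL ℝ (a - b))) a := by
  have h := ((hasFDerivAt_id a).sub_const b).inner ℝ ((hasFDerivAt_id a).sub_const b)
  have he : (fun y : E3 => ‖y - b‖ ^ 2) = fun y : E3 => ⟪y - b, y - b⟫ := by
    funext y; rw [real_inner_self_eq_norm_sq]
  rw [he]
  refine h.congr_fderiv ?_
  symm
  ext v
  simp only [ContinuousLinearMap.smul_apply, innerSL_apply_apply, ContinuousLinearMap.comp_apply,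
    ContinuousLinearMap.prod_apply, ContinuousLinearMap.id_apply, fderivInnerCLM_apply,
    smul_eq_mul]
  simp only [id_eq]
  rw [real_inner_comm v (a - b)]
  ring

/-- `mulVec` landing in `E3`, to pin down the instances. -/
noncomputable def mulVecE (M : Matrix (Fin 3) (Fin 3) ℝ) (v : E3) : E3 :=
  WithLp.toLp 2 (M.mulVec v)

section W

variable {w : ℝ → E3 → E3 → ℝ}

/-- The `x`-part: the cross terms of the positions with the position gradients cancel. -/
lemma x_cross_grad (hw : Differentiable ℝ (fun p : ℝ × E3 × E3 => w p.1 p.2.1 p.2.2))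
    (a b c d : E3) :
    ecross a (gradient (fun y : E3 => w (‖y - b‖ ^ 2) c d) a)
      + ecross b (gradient (fun y : E3 => w (‖a - y‖ ^ 2) c d) b) = 0 := by
  set D := fderiv ℝ (fun p : ℝ × E3 × E3 => w p.1 p.2.1 p.2.2) (‖a - b‖ ^ 2, c, d) with hD
  set k := D (1, 0, 0) with hk
  have h1 : HasFDerivAt (fun y : E3 => w (‖y - b‖ ^ 2) c d)
      (D.comp (((2:ℝ) • innerSL ℝ (a - b)).prod 0)) a := by
    have hc : HasFDerivAt (fun y : E3 => ((‖y - b‖ ^ 2 : ℝ), ((c, d) : E3 × E3)))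
        (((2:ℝ) • innerSL ℝ (a - b)).prod 0) a :=
      (hasFDerivAt_normsq b a).prodMk (hasFDerivAt_const (c, d) a)
    exact ((hw (‖a - b‖ ^ 2, c, d)).hasFDerivAt).comp a hc
  have hfe : (fun y : E3 => w (‖a - y‖ ^ 2) c d) = (fun y : E3 => w (‖y - a‖ ^ 2) c d) := by
    funext y; rw [norm_sub_rev]
  have hba : (‖b - a‖ : ℝ) ^ 2 = ‖a - b‖ ^ 2 := by rw [norm_sub_rev]
  have h2 : HasFDerivAt (fun y : E3 => w (‖y - a‖ ^ 2) c d)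
      (D.comp (((2:ℝ) • innerSL ℝ (b - a)).prod 0)) b := by
    have hc : HasFDerivAt (fun y : E3 => ((‖y - a‖ ^ 2 : ℝ), ((c, d) : E3 × E3)))
        (((2:ℝ) • innerSL ℝ (b - a)).prod 0) b :=
      (hasFDerivAt_normsq a b).prodMk (hasFDerivAt_const (c, d) b)
    have := ((hw (‖b - a‖ ^ 2, c, d)).hasFDerivAt).comp b hc
    rwa [hba] at this
  have key : ∀ (x0 e : E3), HasFDerivAt (fun y : E3 => w (‖y - e‖ ^ 2) c d)
      (D.comp (((2:ℝ) • innerSL ℝ (x0 - e)).prod 0)) x0 →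
      gradient (fun y : E3 => w (‖y - e‖ ^ 2) c d) x0 = (2 * k) • (x0 - e) := by
    intro x0 e h
    apply ext_inner_right ℝ
    intro v
    rw [grad_inner h v]
    have harg : ((((2:ℝ) • innerSL ℝ (x0 - e)).prod 0) v : ℝ × E3 × E3)
        = (2 * ⟪x0 - e, v⟫) • ((1:ℝ), (0:E3), (0:E3)) := by
      simp only [ContinuousLinearMap.prod_apply, ContinuousLinearMap.smul_apply,
        innerSL_apply_apply, ContinuousLinearMap.zero_apply, Prod.smul_mk, smul_zero,
        smul_eq_mul, mul_one]
      rfl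
    rw [ContinuousLinearMap.comp_apply, harg, D.map_smul, real_inner_smul_left]
    simp only [smul_eq_mul, ← hk]
    ring
  rw [key a b h1, hfe, key b a h2]
  exact ecross_cancel (2 * k) a b

/-- Differentiating a one-parameter family of rotations through invariance. -/
lemma rot_deriv_zero (hw : Differentiable ℝ (fun p : ℝ × E3 × E3 => w p.1 p.2.1 p.2.2))
    (hinv : ∀ Q : Matrix (Fin 3) (Fin 3) ℝ, Qᵀ * Q = 1 → Q.det = 1 →
      ∀ (r : ℝ) (ν₁ ν₂ : E3), w r (WithLp.toLp 2 (Q.mulVec ν₁)) (WithLp.toLp 2 (Q.mulVec ν₂)) = w r ν₁ ν₂)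
    (Q : ℝ → Matrix (Fin 3) (Fin 3) ℝ)
    (hQo : ∀ θ, (Q θ)ᵀ * Q θ = 1) (hQd : ∀ θ, (Q θ).det = 1)
    (r : ℝ) (a b da db : E3)
    (hda : HasDerivAt (fun θ => mulVecE (Q θ) a) da 0)
    (hdb : HasDerivAt (fun θ => mulVecE (Q θ) b) db 0)
    (hQ0a : mulVecE (Q 0) a = a) (hQ0b : mulVecE (Q 0) b = b) :
    fderiv ℝ (fun p : ℝ × E3 × E3 => w p.1 p.2.1 p.2.2) (r, a, b) ((0:ℝ), da, db) = 0 := by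
  have hp : HasDerivAt (fun θ => ((r : ℝ), (mulVecE (Q θ) a, mulVecE (Q θ) b)))
      ((0:ℝ), da, db) 0 := (hasDerivAt_const (0:ℝ) r).prodMk (hda.prodMk hdb)
  have hcomp := ((hw (r, mulVecE (Q 0) a, mulVecE (Q 0) b)).hasFDerivAt).comp_hasDerivAt 0 hp
  have hcomp' : HasDerivAt (fun θ => w r (mulVecE (Q θ) a) (mulVecE (Q θ) b))
      (fderiv ℝ (fun p : ℝ × E3 × E3 => w p.1 p.2.1 p.2.2)
        (r, mulVecE (Q 0) a, mulVecE (Q 0) b) ((0:ℝ), da, db)) 0 := hcomp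
  have hfn : (fun θ => w r (mulVecE (Q θ) a) (mulVecE (Q θ) b)) = fun _ => w r a b :=
    funext fun θ => hinv (Q θ) (hQo θ) (hQd θ) r a b
  rw [hfn] at hcomp'
  have hz := hcomp'.unique (hasDerivAt_const (0:ℝ) (w r a b))
  rwa [hQ0a, hQ0b] at hz

end W

/-! ### The three coordinate-axis rotation families -/

noncomputable def Qx (θ : ℝ) : Matrix (Fin 3) (Fin 3) ℝ :=
  !![1,0,0; 0, Real.cos θ, -Real.sin θ; 0, Real.sin θ, Real.cos θ]

noncomputable def Qy (θ : ℝ) : Matrix (Fin 3) (Fin 3) ℝ :=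
  !![Real.cos θ, 0, Real.sin θ; 0,1,0; -Real.sin θ, 0, Real.cos θ]

noncomputable def Qz (θ : ℝ) : Matrix (Fin 3) (Fin 3) ℝ :=
  !![Real.cos θ, -Real.sin θ, 0; Real.sin θ, Real.cos θ, 0; 0,0,1]

lemma Qx_orth (θ : ℝ) : (Qx θ)ᵀ * (Qx θ) = 1 := by
  ext i j
  fin_cases i <;> fin_cases j <;>
    simp [Qx, Matrix.mul_apply, Fin.sum_univ_three, Matrix.one_apply, Matrix.transpose_apply,
      Matrix.vecHead, Matrix.vecTail] <;>
    nlinarith [Real.sin_sq_add_cos_sq θ]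

lemma Qy_orth (θ : ℝ) : (Qy θ)ᵀ * (Qy θ) = 1 := by
  ext i j
  fin_cases i <;> fin_cases j <;>
    simp [Qy, Matrix.mul_apply, Fin.sum_univ_three, Matrix.one_apply, Matrix.transpose_apply,
      Matrix.vecHead, Matrix.vecTail] <;>
    nlinarith [Real.sin_sq_add_cos_sq θ]

lemma Qz_orth (θ : ℝ) : (Qz θ)ᵀ * (Qz θ) = 1 := by
  ext i j
  fin_cases i <;> fin_cases j <;>
    simp [Qz, Matrix.mul_apply, Fin.sum_univ_three, Matrix.one_apply, Matrix.transpose_apply,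
      Matrix.vecHead, Matrix.vecTail] <;>
    nlinarith [Real.sin_sq_add_cos_sq θ]

lemma Qx_det (θ : ℝ) : (Qx θ).det = 1 := by
  simp [Qx, Matrix.det_fin_three]; nlinarith [Real.sin_sq_add_cos_sq θ]

lemma Qy_det (θ : ℝ) : (Qy θ).det = 1 := by
  simp [Qy, Matrix.det_fin_three]; nlinarith [Real.sin_sq_add_cos_sq θ]

lemma Qz_det (θ : ℝ) : (Qz θ).det = 1 := by
  simp [Qz, Matrix.det_fin_three]; nlinarith [Real.sin_sq_add_cos_sq θ]

lemma Qx_zero (a : E3) : mulVecE (Qx 0) a = a := by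
  ext j
  fin_cases j <;>
    simp [mulVecE, Qx, Matrix.mulVec, dotProduct, Fin.sum_univ_three,
      Matrix.vecHead, Matrix.vecTail]

lemma Qy_zero (a : E3) : mulVecE (Qy 0) a = a := by
  ext j
  fin_cases j <;>
    simp [mulVecE, Qy, Matrix.mulVec, dotProduct, Fin.sum_univ_three,
      Matrix.vecHead, Matrix.vecTail]

lemma Qz_zero (a : E3) : mulVecE (Qz 0) a = a := by
  ext j
  fin_cases j <;>
    simp [mulVecE, Qz, Matrix.mulVec, dotProduct, Fin.sum_univ_three,
      Matrix.vecHead, Matrix.vecTail]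

lemma ecross_single0 (a : E3) :
    ecross (EuclideanSpace.single 0 (1:ℝ)) a = (WithLp.toLp 2 ![0, -(a 2), a 1] : E3) := by
  ext j
  fin_cases j <;> simp [ecross, crossProduct, EuclideanSpace.single_apply]

lemma ecross_single1 (a : E3) :
    ecross (EuclideanSpace.single 1 (1:ℝ)) a = (WithLp.toLp 2 ![a 2, 0, -(a 0)] : E3) := by
  ext j
  fin_cases j <;> simp [ecross, crossProduct, EuclideanSpace.single_apply]

lemma ecross_single2 (a : E3) :
    ecross (EuclideanSpace.single 2 (1:ℝ)) a = (WithLp.toLp 2 ![-(a 1), a 0, 0] : E3) := by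
  ext j
  fin_cases j <;> simp [ecross, crossProduct, EuclideanSpace.single_apply]

lemma hasDerivAt_Qx (a : E3) :
    HasDerivAt (fun θ => mulVecE (Qx θ) a) (ecross (EuclideanSpace.single 0 (1:ℝ)) a) 0 := by
  rw [ecross_single0]
  have key : HasDerivAt (fun θ : ℝ => ((Qx θ).mulVec a : Fin 3 → ℝ)) (![0, -(a 2), a 1]) 0 := by
    rw [hasDerivAt_pi]
    intro i
    fin_cases i <;>
      simp [Qx, Matrix.mulVec, dotProduct, Fin.sum_univ_three, Matrix.vecHead,
        Matrix.vecTail]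
    · exact hasDerivAt_const _ _
    · have := (((Real.hasDerivAt_cos 0).mul_const (a 1)).sub
        ((Real.hasDerivAt_sin 0).mul_const (a 2)))
      convert this using 1 <;> simp [sub_eq_add_neg, Pi.add_def, Pi.neg_def]
    · have := (((Real.hasDerivAt_sin 0).mul_const (a 1)).add
        ((Real.hasDerivAt_cos 0).mul_const (a 2)))
      convert this using 1 <;> simp [Pi.add_def, Pi.neg_def]
  exact ((PiLp.continuousLinearEquiv 2 ℝ
    (fun _ : Fin 3 => ℝ)).symm.toContinuousLinearMap.hasFDerivAt.comp_hasDerivAt 0 key)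

lemma hasDerivAt_Qy (a : E3) :
    HasDerivAt (fun θ => mulVecE (Qy θ) a) (ecross (EuclideanSpace.single 1 (1:ℝ)) a) 0 := by
  rw [ecross_single1]
  have key : HasDerivAt (fun θ : ℝ => ((Qy θ).mulVec a : Fin 3 → ℝ)) (![a 2, 0, -(a 0)]) 0 := by
    rw [hasDerivAt_pi]
    intro i
    fin_cases i <;>
      simp [Qy, Matrix.mulVec, dotProduct, Fin.sum_univ_three, Matrix.vecHead,
        Matrix.vecTail]
    · have := (((Real.hasDerivAt_cos 0).mul_const (a 0)).add
        ((Real.hasDerivAt_sin 0).mul_const (a 2)))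
      convert this using 1 <;> simp [Pi.add_def, Pi.neg_def]
    · exact hasDerivAt_const _ _
    · have := ((((Real.hasDerivAt_sin 0).neg).mul_const (a 0)).add
        ((Real.hasDerivAt_cos 0).mul_const (a 2)))
      convert this using 1 <;> simp [Pi.add_def, Pi.neg_def]
  exact ((PiLp.continuousLinearEquiv 2 ℝ
    (fun _ : Fin 3 => ℝ)).symm.toContinuousLinearMap.hasFDerivAt.comp_hasDerivAt 0 key)

lemma hasDerivAt_Qz (a : E3) :
    HasDerivAt (fun θ => mulVecE (Qz θ) a) (ecross (EuclideanSpace.single 2 (1:ℝ)) a) 0 := by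
  rw [ecross_single2]
  have key : HasDerivAt (fun θ : ℝ => ((Qz θ).mulVec a : Fin 3 → ℝ)) (![-(a 1), a 0, 0]) 0 := by
    rw [hasDerivAt_pi]
    intro i
    fin_cases i <;>
      simp [Qz, Matrix.mulVec, dotProduct, Fin.sum_univ_three, Matrix.vecHead,
        Matrix.vecTail]
    · have := (((Real.hasDerivAt_cos 0).mul_const (a 0)).sub
        ((Real.hasDerivAt_sin 0).mul_const (a 1)))
      convert this using 1 <;> simp [sub_eq_add_neg, Pi.add_def, Pi.neg_def]
    · have := (((Real.hasDerivAt_sin 0).mul_const (a 0)).add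
        ((Real.hasDerivAt_cos 0).mul_const (a 1)))
      convert this using 1 <;> simp [Pi.add_def, Pi.neg_def]
    · exact hasDerivAt_const _ _
  exact ((PiLp.continuousLinearEquiv 2 ℝ
    (fun _ : Fin 3 => ℝ)).symm.toContinuousLinearMap.hasFDerivAt.comp_hasDerivAt 0 key)

section W2

variable {w : ℝ → E3 → E3 → ℝ}

/-- The `ν`-part: by frame indifference the director cross terms cancel. -/
lemma nu_cross_grad (hw : Differentiable ℝ (fun p : ℝ × E3 × E3 => w p.1 p.2.1 p.2.2))
    (hinv : ∀ Q : Matrix (Fin 3) (Fin 3) ℝ, Qᵀ * Q = 1 → Q.det = 1 →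
      ∀ (r : ℝ) (ν₁ ν₂ : E3), w r (WithLp.toLp 2 (Q.mulVec ν₁)) (WithLp.toLp 2 (Q.mulVec ν₂)) = w r ν₁ ν₂)
    (r : ℝ) (a b : E3) :
    ecross a (gradient (fun ν : E3 => w r ν b) a)
      + ecross b (gradient (fun ν : E3 => w r a ν) b) = 0 := by
  set D := fderiv ℝ (fun p : ℝ × E3 × E3 => w p.1 p.2.1 p.2.2) (r, a, b) with hD
  have hga : ∀ v : E3, ⟪gradient (fun ν : E3 => w r ν b) a, v⟫ = D ((0:ℝ), v, (0:E3)) := by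
    intro v
    have hc : HasFDerivAt (fun ν : E3 => ((r:ℝ), (ν, b)))
        ((0 : E3 →L[ℝ] ℝ).prod ((ContinuousLinearMap.id ℝ E3).prod 0)) a :=
      (hasFDerivAt_const r a).prodMk ((hasFDerivAt_id a).prodMk (hasFDerivAt_const b a))
    have h : HasFDerivAt (fun ν : E3 => w r ν b)
        ((D).comp ((0 : E3 →L[ℝ] ℝ).prod ((ContinuousLinearMap.id ℝ E3).prod 0))) a := by
      have := ((hw (r, a, b)).hasFDerivAt).comp a hc
      exact this
    rw [grad_inner h v]
    simp [ContinuousLinearMap.comp_apply, ContinuousLinearMap.prod_apply]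
  have hgb : ∀ v : E3, ⟪gradient (fun ν : E3 => w r a ν) b, v⟫ = D ((0:ℝ), (0:E3), v) := by
    intro v
    have hc : HasFDerivAt (fun ν : E3 => ((r:ℝ), (a, ν)))
        ((0 : E3 →L[ℝ] ℝ).prod (((0 : E3 →L[ℝ] E3)).prod (ContinuousLinearMap.id ℝ E3))) b :=
      (hasFDerivAt_const r b).prodMk ((hasFDerivAt_const a b).prodMk (hasFDerivAt_id b))
    have h : HasFDerivAt (fun ν : E3 => w r a ν)
        ((D).comp ((0 : E3 →L[ℝ] ℝ).prod (((0 : E3 →L[ℝ] E3)).prod (ContinuousLinearMap.id ℝ E3)))) b := by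
      have := ((hw (r, a, b)).hasFDerivAt).comp b hc
      exact this
    rw [grad_inner h v]
    simp [ContinuousLinearMap.comp_apply, ContinuousLinearMap.prod_apply]
  have hrot : ∀ i : Fin 3,
      D ((0:ℝ), ecross (EuclideanSpace.single i (1:ℝ)) a,
        ecross (EuclideanSpace.single i (1:ℝ)) b) = 0 := by
    intro i
    fin_cases i
    · exact rot_deriv_zero hw hinv Qx Qx_orth Qx_det r a b _ _
        (hasDerivAt_Qx a) (hasDerivAt_Qx b) (Qx_zero a) (Qx_zero b)
    · exact rot_deriv_zero hw hinv Qy Qy_orth Qy_det r a b _ _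
        (hasDerivAt_Qy a) (hasDerivAt_Qy b) (Qy_zero a) (Qy_zero b)
    · exact rot_deriv_zero hw hinv Qz Qz_orth Qz_det r a b _ _
        (hasDerivAt_Qz a) (hasDerivAt_Qz b) (Qz_zero a) (Qz_zero b)
  ext i
  have h1 : (ecross a (gradient (fun ν : E3 => w r ν b) a)
      + ecross b (gradient (fun ν : E3 => w r a ν) b)) i
      = ecross a (gradient (fun ν : E3 => w r ν b) a) i
        + ecross b (gradient (fun ν : E3 => w r a ν) b) i := rfl
  rw [h1, ecross_apply_eq, ecross_apply_eq, real_inner_comm, real_inner_comm, hga, hgb,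
    ← map_add]
  have harg : (((0:ℝ), ecross (EuclideanSpace.single i (1:ℝ)) a, (0:E3))
      + ((0:ℝ), (0:E3), ecross (EuclideanSpace.single i (1:ℝ)) b) : ℝ × E3 × E3)
      = ((0:ℝ), ecross (EuclideanSpace.single i (1:ℝ)) a,
          ecross (EuclideanSpace.single i (1:ℝ)) b) := by
    simp
  rw [harg, hrot i]
  rfl

end W2

end TwoBodyAux


open TwoBodyAux in
/-- Conservation of the total (generalized) angular momentum
`x₁ × (m x₁') + x₂ × (m x₂') + ν₁ × ν₁' + ν₂ × ν₂'` for two three-dimensional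
calamitic molecules interacting via a frame-indifferent potential
`W(y₁,y₂,ν₁,ν₂) = w(‖y₁ - y₂‖², ν₁, ν₂)`. -/
theorem two_body_angular_momentum_conserved
    (m : ℝ) (hm : 0 < m)
    (w : ℝ → EuclideanSpace ℝ (Fin 3) → EuclideanSpace ℝ (Fin 3) → ℝ)
    (hw : Differentiable ℝ
      (fun p : ℝ × EuclideanSpace ℝ (Fin 3) × EuclideanSpace ℝ (Fin 3) => w p.1 p.2.1 p.2.2))
    (hinv : ∀ Q : Matrix (Fin 3) (Fin 3) ℝ, Qᵀ * Q = 1 → Q.det = 1 →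
      ∀ (r : ℝ) (ν₁ ν₂ : EuclideanSpace ℝ (Fin 3)),
        w r (WithLp.toLp 2 (Q.mulVec ν₁)) (WithLp.toLp 2 (Q.mulVec ν₂)) = w r ν₁ ν₂)
    (x₁ x₂ ν₁ ν₂ : ℝ → EuclideanSpace ℝ (Fin 3))
    (hx₁ : Differentiable ℝ x₁) (hx₁' : Differentiable ℝ (deriv x₁))
    (hx₂ : Differentiable ℝ x₂) (hx₂' : Differentiable ℝ (deriv x₂))
    (hν₁ : Differentiable ℝ ν₁) (hν₁' : Differentiable ℝ (deriv ν₁))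
    (hν₂ : Differentiable ℝ ν₂) (hν₂' : Differentiable ℝ (deriv ν₂))
    (hNx₁ : ∀ t, m • deriv (deriv x₁) t
      = - gradient (fun y : EuclideanSpace ℝ (Fin 3) =>
          w (‖y - x₂ t‖ ^ 2) (ν₁ t) (ν₂ t)) (x₁ t))
    (hNx₂ : ∀ t, m • deriv (deriv x₂) t
      = - gradient (fun y : EuclideanSpace ℝ (Fin 3) =>
          w (‖x₁ t - y‖ ^ 2) (ν₁ t) (ν₂ t)) (x₂ t))
    (hNν₁ : ∀ t, deriv (deriv ν₁) t
      = - gradient (fun ν : EuclideanSpace ℝ (Fin 3) =>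
          w (‖x₁ t - x₂ t‖ ^ 2) ν (ν₂ t)) (ν₁ t))
    (hNν₂ : ∀ t, deriv (deriv ν₂) t
      = - gradient (fun ν : EuclideanSpace ℝ (Fin 3) =>
          w (‖x₁ t - x₂ t‖ ^ 2) (ν₁ t) ν) (ν₂ t)) :
    ∀ s t : ℝ,
      ecross (x₁ s) (m • deriv x₁ s) + ecross (x₂ s) (m • deriv x₂ s)
        + ecross (ν₁ s) (deriv ν₁ s) + ecross (ν₂ s) (deriv ν₂ s)
      = ecross (x₁ t) (m • deriv x₁ t) + ecross (x₂ t) (m • deriv x₂ t)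
        + ecross (ν₁ t) (deriv ν₁ t) + ecross (ν₂ t) (deriv ν₂ t) := by
  have hder : ∀ t : ℝ,
      HasDerivAt (fun τ : ℝ =>
        ecross (x₁ τ) (m • deriv x₁ τ) + ecross (x₂ τ) (m • deriv x₂ τ)
          + ecross (ν₁ τ) (deriv ν₁ τ) + ecross (ν₂ τ) (deriv ν₂ τ)) 0 t := by
    intro t
    have H1 : HasDerivAt (fun τ => ecross (x₁ τ) (m • deriv x₁ τ))
        (ecross (deriv x₁ t) (m • deriv x₁ t)
          + ecross (x₁ t) (m • deriv (deriv x₁) t)) t :=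
      hasDerivAt_ecross (hx₁.differentiableAt.hasDerivAt)
        ((hx₁'.differentiableAt.hasDerivAt).const_smul m)
    have H2 : HasDerivAt (fun τ => ecross (x₂ τ) (m • deriv x₂ τ))
        (ecross (deriv x₂ t) (m • deriv x₂ t)
          + ecross (x₂ t) (m • deriv (deriv x₂) t)) t :=
      hasDerivAt_ecross (hx₂.differentiableAt.hasDerivAt)
        ((hx₂'.differentiableAt.hasDerivAt).const_smul m)
    have H3 : HasDerivAt (fun τ => ecross (ν₁ τ) (deriv ν₁ τ))
        (ecross (deriv ν₁ t) (deriv ν₁ t)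
          + ecross (ν₁ t) (deriv (deriv ν₁) t)) t :=
      hasDerivAt_ecross (hν₁.differentiableAt.hasDerivAt)
        (hν₁'.differentiableAt.hasDerivAt)
    have H4 : HasDerivAt (fun τ => ecross (ν₂ τ) (deriv ν₂ τ))
        (ecross (deriv ν₂ t) (deriv ν₂ t)
          + ecross (ν₂ t) (deriv (deriv ν₂) t)) t :=
      hasDerivAt_ecross (hν₂.differentiableAt.hasDerivAt)
        (hν₂'.differentiableAt.hasDerivAt)
    have Htot := ((H1.add H2).add H3).add H4
    have hE : (ecross (deriv x₁ t) (m • deriv x₁ t)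
          + ecross (x₁ t) (m • deriv (deriv x₁) t)
        + (ecross (deriv x₂ t) (m • deriv x₂ t)
          + ecross (x₂ t) (m • deriv (deriv x₂) t))
        + (ecross (deriv ν₁ t) (deriv ν₁ t)
          + ecross (ν₁ t) (deriv (deriv ν₁) t))
        + (ecross (deriv ν₂ t) (deriv ν₂ t)
          + ecross (ν₂ t) (deriv (deriv ν₂) t))) = 0 := by
      rw [hNx₁ t, hNx₂ t, hNν₁ t, hNν₂ t, ecross_neg, ecross_neg, ecross_neg, ecross_neg,
        ecross_smul_self m (deriv x₁ t), ecross_smul_self m (deriv x₂ t),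
        ecross_self (deriv ν₁ t), ecross_self (deriv ν₂ t)]
      have hx := x_cross_grad hw (x₁ t) (x₂ t) (ν₁ t) (ν₂ t)
      have hn := nu_cross_grad hw hinv (‖x₁ t - x₂ t‖ ^ 2) (ν₁ t) (ν₂ t)
      have hre : (0 + -ecross (x₁ t) (gradient (fun y : EuclideanSpace ℝ (Fin 3) =>
              w (‖y - x₂ t‖ ^ 2) (ν₁ t) (ν₂ t)) (x₁ t))
          + (0 + -ecross (x₂ t) (gradient (fun y : EuclideanSpace ℝ (Fin 3) =>
              w (‖x₁ t - y‖ ^ 2) (ν₁ t) (ν₂ t)) (x₂ t)))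
          + (0 + -ecross (ν₁ t) (gradient (fun ν : EuclideanSpace ℝ (Fin 3) =>
              w (‖x₁ t - x₂ t‖ ^ 2) ν (ν₂ t)) (ν₁ t)))
          + (0 + -ecross (ν₂ t) (gradient (fun ν : EuclideanSpace ℝ (Fin 3) =>
              w (‖x₁ t - x₂ t‖ ^ 2) (ν₁ t) ν) (ν₂ t))))
          = -((ecross (x₁ t) (gradient (fun y : EuclideanSpace ℝ (Fin 3) =>
              w (‖y - x₂ t‖ ^ 2) (ν₁ t) (ν₂ t)) (x₁ t))
            + ecross (x₂ t) (gradient (fun y : EuclideanSpace ℝ (Fin 3) =>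
              w (‖x₁ t - y‖ ^ 2) (ν₁ t) (ν₂ t)) (x₂ t)))
            + (ecross (ν₁ t) (gradient (fun ν : EuclideanSpace ℝ (Fin 3) =>
              w (‖x₁ t - x₂ t‖ ^ 2) ν (ν₂ t)) (ν₁ t))
            + ecross (ν₂ t) (gradient (fun ν : EuclideanSpace ℝ (Fin 3) =>
              w (‖x₁ t - x₂ t‖ ^ 2) (ν₁ t) ν) (ν₂ t)))) := by abel
      rw [hre, hx, hn]
      simp
    exact hE ▸ Htot
  intro s t
  exact is_const_of_deriv_eq_zero
    (fun τ => (hder τ).differentiableAt) (fun τ => (hder τ).deriv) s t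
end

section
/- Let (X, μ) be a σ-finite measure space and let K : X × X → [0, ∞) be measurable satisfying the reciprocity condition: for μ-almost every x ∈ X, ∫ K(x, y) dμ(y) = ∫ K(y, x) dμ(y) < ∞. Let F : X → (0, ∞) be measurable and assume that the functions (x, y) ↦ K(x, y) F(x), (x, y) ↦ K(x, y) F(y), and (x, y) ↦ K(x, y) F(x) |log(F(y)/F(x))| are integrable on X × X with respect to μ ⊗ μ. Then ∫∫ K(x, y) F(x) log(F(y)/F(x)) dμ(x) dμ(y) ≤ 0. -/
open MeasureTheory

/-- The measure-theoretic core of the Boltzmann inequality (H-theorem) for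
ordered fluids, under the Cercignani–Lampis reciprocity condition. -/
theorem boltzmann_inequality
    {X : Type*} [MeasurableSpace X] (μ : Measure X) [SigmaFinite μ]
    (K : X → X → ℝ)
    (hKnn : ∀ x y, 0 ≤ K x y)
    (hKmeas : Measurable (fun p : X × X => K p.1 p.2))
    (hrec : ∀ᵐ x ∂μ, Integrable (fun y => K x y) μ ∧ Integrable (fun y => K y x) μ ∧
      ∫ y, K x y ∂μ = ∫ y, K y x ∂μ)
    (F : X → ℝ) (hFpos : ∀ x, 0 < F x) (hFmeas : Measurable F)
    (hint₁ : Integrable (fun p : X × X => K p.1 p.2 * F p.1) (μ.prod μ))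
    (hint₂ : Integrable (fun p : X × X => K p.1 p.2 * F p.2) (μ.prod μ))
    (hint₃ : Integrable (fun p : X × X => K p.1 p.2 * F p.1 * |Real.log (F p.2 / F p.1)|)
      (μ.prod μ)) :
    ∫ p : X × X, K p.1 p.2 * F p.1 * Real.log (F p.2 / F p.1) ∂(μ.prod μ) ≤ 0 := by
  set f : X × X → ℝ := fun p => K p.1 p.2 * F p.1 * Real.log (F p.2 / F p.1) with hf
  have hfmeas : Measurable f :=
    (hKmeas.mul (hFmeas.comp measurable_fst)).mul
      (Real.measurable_log.comp ((hFmeas.comp measurable_snd).div (hFmeas.comp measurable_fst)))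
  have hfint : Integrable f (μ.prod μ) := by
    refine hint₃.mono' hfmeas.aestronglyMeasurable (Filter.Eventually.of_forall fun p => ?_)
    have h1 : 0 ≤ K p.1 p.2 * F p.1 := mul_nonneg (hKnn _ _) (hFpos _).le
    rw [Real.norm_eq_abs, abs_mul, abs_of_nonneg h1]
  have hle : ∀ p : X × X, f p ≤ K p.1 p.2 * F p.2 - K p.1 p.2 * F p.1 := by
    intro p
    have hpos : 0 < F p.2 / F p.1 := div_pos (hFpos _) (hFpos _)
    have hlog : Real.log (F p.2 / F p.1) ≤ F p.2 / F p.1 - 1 :=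
      Real.log_le_sub_one_of_pos hpos
    have h1 : 0 ≤ K p.1 p.2 * F p.1 := mul_nonneg (hKnn _ _) (hFpos _).le
    calc f p ≤ K p.1 p.2 * F p.1 * (F p.2 / F p.1 - 1) := mul_le_mul_of_nonneg_left hlog h1
      _ = K p.1 p.2 * F p.2 - K p.1 p.2 * F p.1 := by
          rw [mul_sub, mul_one]
          congr 1
          rw [mul_assoc, mul_div_cancel₀ _ (hFpos p.1).ne']
  have hAB : ∫ p : X × X, K p.1 p.2 * F p.1 ∂(μ.prod μ)
      = ∫ p : X × X, K p.1 p.2 * F p.2 ∂(μ.prod μ) := by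
    rw [MeasureTheory.integral_prod _ hint₁, MeasureTheory.integral_prod_symm _ hint₂]
    refine integral_congr_ae ?_
    filter_upwards [hrec] with x hx
    rw [integral_mul_const, integral_mul_const, hx.2.2]
  have := integral_mono hfint (hint₂.sub hint₁) hle
  calc ∫ p : X × X, f p ∂(μ.prod μ)
      ≤ ∫ p : X × X, (K p.1 p.2 * F p.2 - K p.1 p.2 * F p.1) ∂(μ.prod μ) := this
    _ = 0 := by rw [integral_sub hint₂ hint₁, hAB, sub_self]
end

section
/- Let (X, μ) be a σ-finite measure space and let K : X × X → [0, ∞) be measurable satisfying the reciprocity condition: for μ-almost every x ∈ X, ∫ K(x, y) dμ(y) = ∫ K(y, x) dμ(y) < ∞. Let F : X → (0, ∞) be measurable and assume that the functions (x, y) ↦ K(x, y) F(x), (x, y) ↦ K(x, y) F(y), and (x, y) ↦ K(x, y) F(x) |log(F(y)/F(x))| are integrable on X × X with respect to μ ⊗ μ. If ∫∫ K(x, y) F(x) log(F(y)/F(x)) dμ(x) dμ(y) = 0, then the set {(x, y) ∈ X × X : K(x, y) > 0 and F(y) ≠ F(x)} is (μ ⊗ μ)-null. -/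
open MeasureTheory

/-- Equality case of the Boltzmann inequality (Theorem 3.6): when the entropy
production vanishes, `F` is almost everywhere constant on the support of the
collision kernel `K`. -/
theorem boltzmann_inequality_equality_case
    {X : Type*} [MeasurableSpace X] (μ : Measure X) [SigmaFinite μ]
    (K : X → X → ℝ)
    (hKnn : ∀ x y, 0 ≤ K x y)
    (hKmeas : Measurable (fun p : X × X => K p.1 p.2))
    (hrec : ∀ᵐ x ∂μ, Integrable (fun y => K x y) μ ∧ Integrable (fun y => K y x) μ ∧
      ∫ y, K x y ∂μ = ∫ y, K y x ∂μ)
    (F : X → ℝ) (hFpos : ∀ x, 0 < F x) (hFmeas : Measurable F)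
    (hint₁ : Integrable (fun p : X × X => K p.1 p.2 * F p.1) (μ.prod μ))
    (hint₂ : Integrable (fun p : X × X => K p.1 p.2 * F p.2) (μ.prod μ))
    (hint₃ : Integrable (fun p : X × X => K p.1 p.2 * F p.1 * |Real.log (F p.2 / F p.1)|)
      (μ.prod μ))
    (hzero : ∫ p : X × X, K p.1 p.2 * F p.1 * Real.log (F p.2 / F p.1) ∂(μ.prod μ) = 0) :
    (μ.prod μ) {p : X × X | 0 < K p.1 p.2 ∧ F p.2 ≠ F p.1} = 0 := by
  -- the nonnegative "dissipation" integrand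
  set g : X × X → ℝ := fun p =>
    (K p.1 p.2 * F p.2 - K p.1 p.2 * F p.1) - K p.1 p.2 * F p.1 * Real.log (F p.2 / F p.1)
    with hg
  -- measurability of the log term
  have hmeas_log : Measurable (fun p : X × X =>
      K p.1 p.2 * F p.1 * Real.log (F p.2 / F p.1)) := by
    exact (hKmeas.mul (hFmeas.comp measurable_fst)).mul
      ((Real.measurable_log.comp ((hFmeas.comp measurable_snd).div
        (hFmeas.comp measurable_fst))))
  -- integrability of the log term
  have hint_log : Integrable
      (fun p : X × X => K p.1 p.2 * F p.1 * Real.log (F p.2 / F p.1)) (μ.prod μ) := by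
    refine hint₃.mono' hmeas_log.aestronglyMeasurable ?_
    refine Filter.Eventually.of_forall fun p => ?_
    have h0 : 0 ≤ K p.1 p.2 * F p.1 := mul_nonneg (hKnn _ _) (hFpos _).le
    rw [Real.norm_eq_abs, abs_mul, abs_of_nonneg h0]
  have hgint : Integrable g (μ.prod μ) := (hint₂.sub hint₁).sub hint_log
  -- pointwise nonnegativity of g
  have hgnn : ∀ p : X × X, 0 ≤ g p := by
    intro p
    have hx := hFpos p.1
    have ht : 0 < F p.2 / F p.1 := div_pos (hFpos p.2) hx
    have hlog : Real.log (F p.2 / F p.1) ≤ F p.2 / F p.1 - 1 :=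
      Real.log_le_sub_one_of_pos ht
    have key : F p.1 * Real.log (F p.2 / F p.1) ≤ F p.2 - F p.1 := by
      have := mul_le_mul_of_nonneg_left hlog hx.le
      calc F p.1 * Real.log (F p.2 / F p.1) ≤ F p.1 * (F p.2 / F p.1 - 1) := this
        _ = F p.2 - F p.1 := by field_simp
    have : K p.1 p.2 * (F p.1 * Real.log (F p.2 / F p.1)) ≤ K p.1 p.2 * (F p.2 - F p.1) :=
      mul_le_mul_of_nonneg_left key (hKnn _ _)
    simp only [hg]; nlinarith
  -- reciprocity: the two marginal integrals agree
  have hswap : ∫ p : X × X, K p.1 p.2 * F p.2 ∂(μ.prod μ)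
      = ∫ p : X × X, K p.1 p.2 * F p.1 ∂(μ.prod μ) := by
    have h1 : ∫ p : X × X, K p.1 p.2 * F p.2 ∂(μ.prod μ)
        = ∫ p : X × X, K p.2 p.1 * F p.1 ∂(μ.prod μ) := by
      rw [← integral_prod_swap (fun p : X × X => K p.1 p.2 * F p.2)]
      rfl
    rw [h1]
    have h2 : ∫ p : X × X, K p.2 p.1 * F p.1 ∂(μ.prod μ)
        = ∫ x, ∫ y, K y x * F x ∂μ ∂μ := integral_prod _ hint₂.swap
    have h3 : ∫ p : X × X, K p.1 p.2 * F p.1 ∂(μ.prod μ)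
        = ∫ x, ∫ y, K x y * F x ∂μ ∂μ := integral_prod _ hint₁
    rw [h2, h3]
    refine integral_congr_ae ?_
    filter_upwards [hrec] with x ⟨hi1, hi2, heq⟩
    rw [integral_mul_const, integral_mul_const, heq]
  -- hence the integral of g vanishes
  have hgzero : ∫ p, g p ∂(μ.prod μ) = 0 := by
    have h := integral_sub (hint₂.sub hint₁) hint_log
    simp only [Pi.sub_apply] at h
    simp only [hg]
    rw [h, integral_sub hint₂ hint₁, hswap, hzero]
    ring
  -- so g = 0 a.e.
  have hgae : g =ᵐ[μ.prod μ] 0 :=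
    (integral_eq_zero_iff_of_nonneg hgnn hgint).mp hgzero
  -- on the bad set, g is strictly positive, hence the set is contained in {g ≠ 0}
  have hnull : (μ.prod μ) {p : X × X | g p ≠ 0} = 0 := by
    have := hgae
    rw [Filter.EventuallyEq, ae_iff] at this
    simpa using this
  refine measure_mono_null (fun p hp => ?_) hnull
  obtain ⟨hK, hne⟩ := hp
  have hx := hFpos p.1
  have ht : 0 < F p.2 / F p.1 := div_pos (hFpos p.2) hx
  have ht1 : F p.2 / F p.1 ≠ 1 := fun h =>
    hne ((div_eq_one_iff_eq hx.ne').mp h)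
  have hlog : Real.log (F p.2 / F p.1) < F p.2 / F p.1 - 1 :=
    Real.log_lt_sub_one_of_pos ht ht1
  have key : F p.1 * Real.log (F p.2 / F p.1) < F p.2 - F p.1 := by
    have := mul_lt_mul_of_pos_left hlog hx
    calc F p.1 * Real.log (F p.2 / F p.1) < F p.1 * (F p.2 / F p.1 - 1) := this
      _ = F p.2 - F p.1 := by field_simp
  have : K p.1 p.2 * (F p.1 * Real.log (F p.2 / F p.1)) < K p.1 p.2 * (F p.2 - F p.1) :=
    mul_lt_mul_of_pos_left key hK
  show g p ≠ 0
  simp only [hg]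
  nlinarith
end

section
/- Let m > 0 and let B be a real symmetric positive definite 3×3 matrix. Define the microscopic kinetic energy E(p, ς) = m⁻¹ (p · p) + ς · B⁻¹ ς for p, ς ∈ ℝ³. Suppose φ : ℝ³ × ℝ³ → ℝ is continuous and satisfies φ(p₁, ς₁) + φ(p₂, ς₂) = φ(p₁', ς₁') + φ(p₂', ς₂') for all tuples (p₁, ς₁, p₂, ς₂, p₁', ς₁', p₂', ς₂') with p₁ + p₂ = p₁' + p₂', ς₁ + ς₂ = ς₁' + ς₂', and E(p₁, ς₁) + E(p₂, ς₂) = E(p₁', ς₁') + E(p₂', ς₂'). Then there exist a, δ ∈ ℝ and b, c ∈ ℝ³ such that φ(p, ς) = a + b · p + c · ς + δ E(p, ς) for all p, ς ∈ ℝ³. -/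
open Matrix

private abbrev V6' := (Fin 3 → ℝ) × (Fin 3 → ℝ)

private lemma exists_orth' (ip : V6' → V6' → ℝ)
    (hadd : ∀ x y z, ip x (y + z) = ip x y + ip x z)
    (hsmul : ∀ (c : ℝ) x y, ip x (c • y) = c * ip x y)
    (hsym : ∀ x y, ip x y = ip y x)
    (hpos : ∀ x, x ≠ 0 → 0 < ip x x)
    (x : V6') (r : ℝ) (hr : 0 ≤ r) : ∃ u, ip x u = 0 ∧ ip u u = r := by
  have hker : ∃ v : V6', v ≠ 0 ∧ ip x v = 0 := by
    let f : V6' →ₗ[ℝ] ℝ :=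
      { toFun := fun v => ip x v
        map_add' := fun a b => hadd x a b
        map_smul' := fun c v => by simpa using hsmul c x v }
    have hne : LinearMap.ker f ≠ ⊥ := by
      intro hbot
      have hinj : Function.Injective f := LinearMap.ker_eq_bot.mp hbot
      have hle := LinearMap.finrank_le_finrank_of_injective hinj
      have h6 : Module.finrank ℝ V6' = 6 := by
        rw [Module.finrank_prod, Module.finrank_fin_fun]
      rw [h6, Module.finrank_self] at hle
      omega
    obtain ⟨v, hv, hv0⟩ := (Submodule.ne_bot_iff _).mp hne
    exact ⟨v, hv0, hv⟩
  obtain ⟨v, hv0, hxv⟩ := hker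
  have hQv : 0 < ip v v := hpos v hv0
  refine ⟨Real.sqrt (r / ip v v) • v, by rw [hsmul, hxv, mul_zero], ?_⟩
  have hsq : Real.sqrt (r / ip v v) ^ 2 = r / ip v v :=
    Real.sq_sqrt (div_nonneg hr hQv.le)
  have : ip (Real.sqrt (r / ip v v) • v) (Real.sqrt (r / ip v v) • v)
      = Real.sqrt (r / ip v v) ^ 2 * ip v v := by
    rw [hsmul, hsym (Real.sqrt (r / ip v v) • v) v, hsmul]; ring
  rw [this, hsq]
  field_simp

/-- Main structural lemma: a continuous collision invariant vanishing at the origin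
is the sum of a continuous linear functional and a multiple of the quadratic form. -/
private lemma collision_main (ip : V6' → V6' → ℝ)
    (hadd : ∀ x y z, ip x (y + z) = ip x y + ip x z)
    (hsmul : ∀ (c : ℝ) x y, ip x (c • y) = c * ip x y)
    (hsym : ∀ x y, ip x y = ip y x)
    (hpos : ∀ x, x ≠ 0 → 0 < ip x x)
    (ψ : V6' → ℝ) (hψc : Continuous ψ) (hψ0 : ψ 0 = 0)
    (col : ∀ x y x' y' : V6', x + y = x' + y' →
      ip x x + ip y y = ip x' x' + ip y' y' → ψ x + ψ y = ψ x' + ψ y') :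
    ∃ (δ : ℝ) (L : V6' →L[ℝ] ℝ), ∀ x, ψ x = L x + δ * ip x x := by
  -- derived bilinear form facts
  have hzero : ∀ x, ip x 0 = 0 := by
    intro x; have h := hadd x 0 0; rw [add_zero] at h; linarith
  have hneg : ∀ x y, ip x (-y) = - ip x y := by
    intro x y; have h := hsmul (-1) x y; rw [neg_one_smul] at h; rw [h]; ring
  have haddl : ∀ x y z, ip (x + y) z = ip x z + ip y z := by
    intro x y z; rw [hsym, hadd, hsym z x, hsym z y]
  have hnonneg : ∀ x, 0 ≤ ip x x := by
    intro x
    rcases eq_or_ne x 0 with h | h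
    · rw [h, hzero]
    · exact (hpos x h).le
  have hexp : ∀ x y, ip (x + y) (x + y) = ip x x + 2 * ip x y + ip y y := by
    intro x y
    rw [hadd, haddl, haddl, hsym y x]; ring
  have hQsmul : ∀ (c : ℝ) x, ip (c • x) (c • x) = c ^ 2 * ip x x := by
    intro c x; rw [hsmul, hsym (c • x) x, hsmul]; ring
  have hQneg : ∀ x, ip (-x) (-x) = ip x x := by
    intro x; rw [← neg_one_smul ℝ x, hQsmul]; ring
  -- orthogonal additivity of ψ and of ψ ∘ neg
  have OAψ : ∀ x y, ip x y = 0 → ψ (x + y) = ψ x + ψ y := by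
    intro x y hxy
    have h := col x y (x + y) 0 (by rw [add_zero])
      (by rw [hexp, hxy, hzero]; ring)
    rw [hψ0] at h; linarith
  have OAn : ∀ x y, ip x y = 0 → ψ (-(x + y)) = ψ (-x) + ψ (-y) := by
    intro x y hxy
    have hneg2 : ip (-x) (-y) = 0 := by
      rw [hneg, hsym, hneg, hsym y x, hxy]; ring
    have h := OAψ (-x) (-y) hneg2
    rwa [← neg_add] at h
  -- odd and even parts
  set g : V6' → ℝ := fun x => (ψ x - ψ (-x)) / 2 with hgdef
  set h : V6' → ℝ := fun x => (ψ x + ψ (-x)) / 2 with hhdef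
  have g0 : g 0 = 0 := by simp [hgdef, hψ0]
  have h0 : h 0 = 0 := by simp [hhdef, hψ0]
  have gc : Continuous g := ((hψc.sub (hψc.comp continuous_neg)).div_const 2)
  have hc : Continuous h := ((hψc.add (hψc.comp continuous_neg)).div_const 2)
  have godd : ∀ x, g (-x) = - g x := by intro x; simp only [hgdef, neg_neg]; ring
  have heven : ∀ x, h (-x) = h x := by intro x; simp only [hhdef, neg_neg]; ring
  have gOA : ∀ x y, ip x y = 0 → g (x + y) = g x + g y := by
    intro x y hxy
    simp only [hgdef]
    rw [OAψ x y hxy, OAn x y hxy]; ring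
  have hOA : ∀ x y, ip x y = 0 → h (x + y) = h x + h y := by
    intro x y hxy
    simp only [hhdef]
    rw [OAψ x y hxy, OAn x y hxy]; ring
  -- h is constant on spheres of the quadratic form
  have hsphere2 : ∀ x y, ip x x = ip y y → h ((2:ℝ) • x) = h ((2:ℝ) • y) := by
    intro x y hQ
    have hperp : ip (x + y) (x - y) = 0 := by
      rw [sub_eq_add_neg, hadd, hneg, haddl, haddl, hsym y x, hQ]; ring
    have hperp' : ip (x + y) (y - x) = 0 := by
      rw [show y - x = -(x - y) by abel, hneg, hperp, neg_zero]
    have e1 := hOA (x + y) (x - y) hperp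
    have e2 := hOA (x + y) (y - x) hperp'
    have hxy2 : (x + y) + (x - y) = (2:ℝ) • x := by rw [two_smul]; abel
    have hyx2 : (x + y) + (y - x) = (2:ℝ) • y := by rw [two_smul]; abel
    have heq : h (x - y) = h (y - x) := by
      rw [show y - x = -(x - y) by abel, heven]
    rw [← hxy2, ← hyx2, e1, e2, heq]
  have hsphere : ∀ x y, ip x x = ip y y → h x = h y := by
    intro x y hQ
    have h2 := hsphere2 ((2:ℝ)⁻¹ • x) ((2:ℝ)⁻¹ • y) (by rw [hQsmul, hQsmul, hQ])
    rw [smul_smul, smul_smul] at h2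
    norm_num at h2
    exact h2
  -- a unit vector
  obtain ⟨e, -, hee⟩ := exists_orth' ip hadd hsmul hsym hpos 0 1 zero_le_one
  set H : ℝ → ℝ := fun t => h (Real.sqrt t • e) with hHdef
  have hH : ∀ x, h x = H (ip x x) := by
    intro x
    apply hsphere
    rw [hQsmul, hee, Real.sq_sqrt (hnonneg x)]; ring
  have H0 : H 0 = 0 := by
    simp only [hHdef, Real.sqrt_zero, zero_smul]; exact h0
  have Hc : Continuous H := hc.comp (Real.continuous_sqrt.smul continuous_const)
  have Hadd : ∀ s t, 0 ≤ s → 0 ≤ t → H (s + t) = H s + H t := by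
    intro s t hs ht
    obtain ⟨u, hu0, huu⟩ := exists_orth' ip hadd hsmul hsym hpos (Real.sqrt s • e) t ht
    have hQx : ip (Real.sqrt s • e) (Real.sqrt s • e) = s := by
      rw [hQsmul, hee, Real.sq_sqrt hs]; ring
    have h1 := hOA (Real.sqrt s • e) u hu0
    have hQsum : ip (Real.sqrt s • e + u) (Real.sqrt s • e + u) = s + t := by
      rw [hexp, hQx, hu0, huu]; ring
    have e1 := hH (Real.sqrt s • e + u); rw [hQsum] at e1
    have e2 := hH (Real.sqrt s • e); rw [hQx] at e2
    have e3 := hH u; rw [huu] at e3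
    linarith
  -- extend to an additive function on ℝ
  set K : ℝ → ℝ := fun t => H (max t 0) - H (max (-t) 0) with hKdef
  have Kpos : ∀ a, 0 ≤ a → K a = H a := by
    intro a ha
    simp only [hKdef]
    rw [max_eq_left ha, max_eq_right (neg_nonpos.mpr ha), H0, sub_zero]
  have Kneg : ∀ a, a ≤ 0 → K a = - H (-a) := by
    intro a ha
    simp only [hKdef]
    rw [max_eq_right ha, max_eq_left (neg_nonneg.mpr ha), H0, zero_sub]
  have Kc : Continuous K :=
    (Hc.comp (continuous_id.max continuous_const)).sub
      (Hc.comp (continuous_neg.max continuous_const))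
  have Kadd : ∀ s t, K (s + t) = K s + K t := by
    intro s t
    rcases le_total 0 s with hs | hs <;> rcases le_total 0 t with ht | ht <;>
      rcases le_total 0 (s + t) with hst | hst
    · rw [Kpos _ hst, Kpos _ hs, Kpos _ ht]; exact Hadd s t hs ht
    · have hs0 : s = 0 := le_antisymm (by linarith) hs
      have ht0 : t = 0 := le_antisymm (by linarith) ht
      rw [hs0, ht0, add_zero, Kpos 0 le_rfl, H0]; ring
    · rw [Kpos _ hst, Kpos _ hs, Kneg _ ht]
      have h := Hadd (s + t) (-t) hst (neg_nonneg.mpr ht)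
      rw [show s + t + -t = s by ring] at h; linarith
    · rw [Kneg _ hst, Kpos _ hs, Kneg _ ht]
      have h := Hadd (-(s + t)) s (by linarith) hs
      rw [show -(s + t) + s = -t by ring] at h; linarith
    · rw [Kpos _ hst, Kneg _ hs, Kpos _ ht]
      have h := Hadd (s + t) (-s) hst (neg_nonneg.mpr hs)
      rw [show s + t + -s = t by ring] at h; linarith
    · rw [Kneg _ hst, Kneg _ hs, Kpos _ ht]
      have h := Hadd (-(s + t)) t (by linarith) ht
      rw [show -(s + t) + t = -s by ring] at h; linarith
    · have hs0 : s = 0 := le_antisymm hs (by linarith)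
      have ht0 : t = 0 := le_antisymm ht (by linarith)
      rw [hs0, ht0, add_zero, Kpos 0 le_rfl, H0]; ring
    · rw [Kneg _ hst, Kneg _ hs, Kneg _ ht]
      have h := Hadd (-s) (-t) (neg_nonneg.mpr hs) (neg_nonneg.mpr ht)
      rw [show -s + -t = -(s + t) by ring] at h; linarith
  have Klin : ∀ t, K t = t * K 1 := by
    intro t
    have h := map_real_smul (AddMonoidHom.mk' K Kadd) Kc t 1
    simpa using h
  have hhfin : ∀ x, h x = K 1 * ip x x := by
    intro x
    rw [hH x, ← Kpos _ (hnonneg x), Klin]; ring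
  -- odd part : doubling
  have g2 : ∀ x, g ((2:ℝ) • x) = 2 * g x := by
    intro x
    obtain ⟨y, hy0, hyy⟩ := exists_orth' ip hadd hsmul hsym hpos x (ip x x) (hnonneg x)
    have hperp : ip (x + y) (x - y) = 0 := by
      rw [sub_eq_add_neg, hadd, hneg, haddl, haddl, hsym y x, hyy]; ring
    have e1 := gOA (x + y) (x - y) hperp
    have e2 := gOA x y hy0
    have e3 : g (x - y) = g x - g y := by
      have h := gOA x (-y) (by rw [hneg, hy0, neg_zero])
      rw [← sub_eq_add_neg] at h
      rw [h, godd]; ring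
    have e4 : (x + y) + (x - y) = (2:ℝ) • x := by rw [two_smul]; abel
    rw [← e4, e1, e2, e3]; ring
  -- general collision relation for g
  have colg : ∀ x y x' y' : V6', x + y = x' + y' →
      ip x x + ip y y = ip x' x' + ip y' y' → g x + g y = g x' + g y' := by
    intro x y x' y' hs hq
    have h1 := col x y x' y' hs hq
    have h2 := col (-x) (-y) (-x') (-y')
      (by rw [← neg_add, ← neg_add, hs])
      (by rw [hQneg, hQneg, hQneg, hQneg]; exact hq)
    simp only [hgdef]; linarith
  -- additivity of g along lines
  have gline : ∀ (x : V6') (s t : ℝ), g ((s + t) • x) = g (s • x) + g (t • x) := by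
    intro x s t
    obtain ⟨u, hu0, huu⟩ := exists_orth' ip hadd hsmul hsym hpos x
      (((s - t) / 2) ^ 2 * ip x x) (mul_nonneg (sq_nonneg _) (hnonneg x))
    set c : ℝ := (s + t) / 2 with hcdef
    have h1 : ip (c • x) u = 0 := by
      rw [hsym, hsmul, hsym u x, hu0, mul_zero]
    have hsum : s • x + t • x = (c • x + u) + (c • x - u) := by
      have : (c • x + u) + (c • x - u) = (c + c) • x := by rw [add_smul]; abel
      rw [this, show c + c = s + t by rw [hcdef]; ring, ← add_smul]
    have hen : ip (s • x) (s • x) + ip (t • x) (t • x)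
        = ip (c • x + u) (c • x + u) + ip (c • x - u) (c • x - u) := by
      have hxu : ip (c • x + u) (c • x + u)
          = c ^ 2 * ip x x + ((s - t) / 2) ^ 2 * ip x x := by
        rw [hexp, hQsmul, h1, huu]; ring
      have hxu2 : ip (c • x - u) (c • x - u)
          = c ^ 2 * ip x x + ((s - t) / 2) ^ 2 * ip x x := by
        rw [sub_eq_add_neg, hexp, hQsmul, hneg, h1, hQneg, huu]; ring
      rw [hxu, hxu2, hQsmul, hQsmul, hcdef]; ring
    have hcol := colg (s • x) (t • x) (c • x + u) (c • x - u) hsum hen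
    have e1 : g (c • x + u) = g (c • x) + g u := gOA _ _ h1
    have e2 : g (c • x - u) = g (c • x) - g u := by
      have h := gOA (c • x) (-u) (by rw [hneg, h1, neg_zero])
      rw [← sub_eq_add_neg] at h
      rw [h, godd]; ring
    have e3 := g2 (c • x)
    have e4 : (2:ℝ) • (c • x) = (s + t) • x := by
      rw [smul_smul, hcdef, show (2:ℝ) * ((s + t) / 2) = s + t by ring]
    rw [← e4, e3]; linarith
  -- full additivity of g
  have gadd : ∀ x y, g (x + y) = g x + g y := by
    intro x y
    by_cases hx : x = 0
    · rw [hx, zero_add, g0, zero_add]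
    · have hQx := hpos x hx
      set α : ℝ := ip x y / ip x x with hαdef
      have hz : ip x (y - α • x) = 0 := by
        rw [sub_eq_add_neg, hadd, hneg, hsmul, hαdef]
        field_simp; ring
      have hz1 : ip (α • x) (y - α • x) = 0 := by
        rw [hsym, hsmul, hsym (y - α • x) x, hz, mul_zero]
      have hz2 : ip ((1 + α) • x) (y - α • x) = 0 := by
        rw [hsym, hsmul, hsym (y - α • x) x, hz, mul_zero]
      have d1 : g y = g (α • x) + g (y - α • x) := by
        have h := gOA (α • x) (y - α • x) hz1
        rw [show α • x + (y - α • x) = y by abel] at h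
        exact h
      have d2 : g (x + y) = g ((1 + α) • x) + g (y - α • x) := by
        have h := gOA ((1 + α) • x) (y - α • x) hz2
        rw [show (1 + α) • x + (y - α • x) = x + y by rw [add_smul, one_smul]; abel] at h
        exact h
      have d3 := gline x 1 α
      rw [one_smul] at d3
      rw [d2, d3, d1]; ring
  have glin : ∀ (c : ℝ) (x : V6'), g (c • x) = c * g x := by
    intro c x
    have h := map_real_smul (AddMonoidHom.mk' g gadd) gc c x
    simpa using h
  refine ⟨K 1, (AddMonoidHom.mk' g gadd).toRealLinearMap gc, ?_⟩
  intro x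
  have hLx : ((AddMonoidHom.mk' g gadd).toRealLinearMap gc) x = g x := rfl
  have hgh : g x + h x = ψ x := by simp only [hgdef, hhdef]; ring
  rw [hLx]
  have := hhfin x
  linarith
/-- Characterization of continuous collision invariants (Theorem 3.7 / Appendix B):
any continuous function conserved by every binary collision preserving the total
linear momentum, the total conjugate order-parameter momentum and the total
kinetic energy is an affine combination of these quantities. -/
theorem collision_invariants_characterization
    (m : ℝ) (hm : 0 < m)
    (B : Matrix (Fin 3) (Fin 3) ℝ)
    (hBsym : Bᵀ = B)
    (hBpos : ∀ x : Fin 3 → ℝ, x ≠ 0 → 0 < x ⬝ᵥ B.mulVec x)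
    (E : (Fin 3 → ℝ) → (Fin 3 → ℝ) → ℝ)
    (hE : ∀ p ς, E p ς = m⁻¹ * (p ⬝ᵥ p) + ς ⬝ᵥ B⁻¹.mulVec ς)
    (φ : (Fin 3 → ℝ) × (Fin 3 → ℝ) → ℝ)
    (hφcont : Continuous φ)
    (hφinv : ∀ p₁ ς₁ p₂ ς₂ p₁' ς₁' p₂' ς₂' : Fin 3 → ℝ,
      p₁ + p₂ = p₁' + p₂' → ς₁ + ς₂ = ς₁' + ς₂' →
      E p₁ ς₁ + E p₂ ς₂ = E p₁' ς₁' + E p₂' ς₂' →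
      φ (p₁, ς₁) + φ (p₂, ς₂) = φ (p₁', ς₁') + φ (p₂', ς₂')) :
    ∃ (a δ : ℝ) (b c : Fin 3 → ℝ), ∀ p ς : Fin 3 → ℝ,
      φ (p, ς) = a + b ⬝ᵥ p + c ⬝ᵥ ς + δ * E p ς := by
  classical
  -- `B` and `B⁻¹` are positive definite
  have hBposdef : B.PosDef := by
    refine Matrix.PosDef.of_dotProduct_mulVec_pos ?_ (fun x hx => by simpa using hBpos x hx)
    rw [Matrix.IsHermitian, conjTranspose_eq_transpose_of_trivial, hBsym]
  have hA : (B⁻¹).PosDef := hBposdef.inv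
  have hApos : ∀ x : Fin 3 → ℝ, x ≠ 0 → 0 < x ⬝ᵥ B⁻¹.mulVec x := by
    intro x hx; simpa using hA.dotProduct_mulVec_pos hx
  have hAsymM : (B⁻¹)ᵀ = B⁻¹ := by
    rw [Matrix.transpose_nonsing_inv, hBsym]
  have hAsym : ∀ x y : Fin 3 → ℝ, x ⬝ᵥ B⁻¹.mulVec y = y ⬝ᵥ B⁻¹.mulVec x := by
    intro x y
    calc x ⬝ᵥ B⁻¹ *ᵥ y = (x ᵥ* B⁻¹) ⬝ᵥ y := dotProduct_mulVec x B⁻¹ y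
      _ = ((B⁻¹)ᵀ *ᵥ x) ⬝ᵥ y := by rw [mulVec_transpose]
      _ = (B⁻¹ *ᵥ x) ⬝ᵥ y := by rw [hAsymM]
      _ = y ⬝ᵥ B⁻¹ *ᵥ x := dotProduct_comm _ _
  -- the quadratic form on the six-dimensional phase space
  set ip : V6' → V6' → ℝ :=
    fun x y => m⁻¹ * (x.1 ⬝ᵥ y.1) + x.2 ⬝ᵥ B⁻¹.mulVec y.2 with hipdef
  have hadd : ∀ x y z : V6', ip x (y + z) = ip x y + ip x z := by
    intro x y z
    simp only [hipdef, Prod.fst_add, Prod.snd_add, dotProduct_add, Matrix.mulVec_add]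
    ring
  have hsmul : ∀ (c : ℝ) (x y : V6'), ip x (c • y) = c * ip x y := by
    intro c x y
    simp only [hipdef, Prod.smul_fst, Prod.smul_snd, dotProduct_smul,
      Matrix.mulVec_smul, smul_eq_mul]
    ring
  have hsym : ∀ x y : V6', ip x y = ip y x := by
    intro x y
    simp only [hipdef]
    rw [dotProduct_comm x.1 y.1, hAsym]
  have hpos : ∀ x : V6', x ≠ 0 → 0 < ip x x := by
    intro x hx
    have hq1 : 0 ≤ m⁻¹ * (x.1 ⬝ᵥ x.1) := by
      refine mul_nonneg (inv_nonneg.mpr hm.le) ?_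
      have := dotProduct_star_self_nonneg x.1
      simpa using this
    have hq2 : 0 ≤ x.2 ⬝ᵥ B⁻¹ *ᵥ x.2 := by
      rcases eq_or_ne x.2 0 with h | h
      · simp [h]
      · exact (hApos x.2 h).le
    have hx12 : x.1 ≠ 0 ∨ x.2 ≠ 0 := by
      by_contra hcon
      push_neg at hcon
      exact hx (Prod.ext hcon.1 hcon.2)
    rcases hx12 with h | h
    · have h1 : 0 < m⁻¹ * (x.1 ⬝ᵥ x.1) := by
        refine mul_pos (inv_pos.mpr hm) ?_
        rcases lt_or_eq_of_le (by simpa using dotProduct_star_self_nonneg x.1 :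
          (0:ℝ) ≤ x.1 ⬝ᵥ x.1) with h' | h'
        · exact h'
        · exact absurd (dotProduct_self_eq_zero.mp h'.symm) h
      simp only [hipdef]
      exact add_pos_of_pos_of_nonneg h1 hq2
    · simp only [hipdef]
      exact add_pos_of_nonneg_of_pos hq1 (hApos x.2 h)
  have hQE : ∀ p ς, E p ς = ip (p, ς) (p, ς) := by
    intro p ς; rw [hE]
  -- the shifted invariant
  set ψ : V6' → ℝ := fun x => φ x - φ 0 with hψdef
  have hψc : Continuous ψ := hφcont.sub continuous_const
  have hψ0 : ψ 0 = 0 := by simp [hψdef]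
  have col : ∀ x y x' y' : V6', x + y = x' + y' →
      ip x x + ip y y = ip x' x' + ip y' y' → ψ x + ψ y = ψ x' + ψ y' := by
    intro x y x' y' hs hq
    have h1 : x.1 + y.1 = x'.1 + y'.1 := by
      rw [← Prod.fst_add, ← Prod.fst_add, hs]
    have h2 : x.2 + y.2 = x'.2 + y'.2 := by
      rw [← Prod.snd_add, ← Prod.snd_add, hs]
    have h3 : E x.1 x.2 + E y.1 y.2 = E x'.1 x'.2 + E y'.1 y'.2 := by
      rw [hQE, hQE, hQE, hQE]
      simpa using hq
    have h4 := hφinv x.1 x.2 y.1 y.2 x'.1 x'.2 y'.1 y'.2 h1 h2 h3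
    simp only [Prod.mk.eta] at h4
    simp only [hψdef]
    linarith
  obtain ⟨δ, L, hL⟩ := collision_main ip hadd hsmul hsym hpos ψ hψc hψ0 col
  -- extract the linear part coefficients
  refine ⟨φ 0, δ, fun i => L ((fun j => if i = j then 1 else 0), 0),
    fun i => L (0, (fun j => if i = j then 1 else 0)), ?_⟩
  intro p ς
  have hLsplit : L (p, ς) = L (p, (0 : Fin 3 → ℝ)) + L ((0 : Fin 3 → ℝ), ς) := by
    rw [← map_add]
    congr 1
    simp [Prod.mk_add_mk]
  have hL1 : L (p, (0 : Fin 3 → ℝ))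
      = (fun i => L ((fun j => if i = j then 1 else 0), 0)) ⬝ᵥ p := by
    set L1 : (Fin 3 → ℝ) →ₗ[ℝ] ℝ :=
      { toFun := fun v => L (v, 0)
        map_add' := fun a b => by rw [← map_add]; simp [Prod.mk_add_mk]
        map_smul' := fun c v => by
          show L (c • v, 0) = c • L (v, 0)
          rw [show ((c • v, (0 : Fin 3 → ℝ)) : V6') = c • ((v, 0) : V6') by
            simp [Prod.smul_mk], L.map_smul] } with hL1def
    have := LinearMap.pi_apply_eq_sum_univ L1 p
    simp only [hL1def, LinearMap.coe_mk, AddHom.coe_mk] at this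
    rw [this, dotProduct]
    exact Finset.sum_congr rfl fun i _ => by rw [smul_eq_mul, mul_comm]
  have hL2 : L ((0 : Fin 3 → ℝ), ς)
      = (fun i => L (0, (fun j => if i = j then 1 else 0))) ⬝ᵥ ς := by
    set L2 : (Fin 3 → ℝ) →ₗ[ℝ] ℝ :=
      { toFun := fun v => L (0, v)
        map_add' := fun a b => by rw [← map_add]; simp [Prod.mk_add_mk]
        map_smul' := fun c v => by
          show L (0, c • v) = c • L (0, v)
          rw [show (((0 : Fin 3 → ℝ), c • v) : V6') = c • (((0 : Fin 3 → ℝ), v) : V6') by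
            simp [Prod.smul_mk], L.map_smul] } with hL2def
    have := LinearMap.pi_apply_eq_sum_univ L2 ς
    simp only [hL2def, LinearMap.coe_mk, AddHom.coe_mk] at this
    rw [this, dotProduct]
    exact Finset.sum_congr rfl fun i _ => by rw [smul_eq_mul, mul_comm]
  have hmain := hL (p, ς)
  simp only [hψdef] at hmain
  rw [hQE p ς, hLsplit, hL1, hL2] at *
  linarith
end

section
/- Let m > 0 and let B be a real symmetric positive definite 3×3 matrix. Define the microscopic kinetic energy E(p, ς) = m⁻¹ (p · p) + ς · B⁻¹ ς for p, ς ∈ ℝ³. A continuous function f : ℝ³ × ℝ³ → (0, ∞) satisfies f(p₁, ς₁) f(p₂, ς₂) = f(p₁', ς₁') f(p₂', ς₂') for all tuples (p₁, ς₁, p₂, ς₂, p₁', ς₁', p₂', ς₂') with p₁ + p₂ = p₁' + p₂', ς₁ + ς₂ = ς₁' + ς₂', and E(p₁, ς₁) + E(p₂, ς₂) = E(p₁', ς₁') + E(p₂', ς₂') if and only if there exist a, δ ∈ ℝ and b, c ∈ ℝ³ such that f(p, ς) = exp(a + b · p + c · ς + δ E(p, ς)) for all p, ς ∈ ℝ³.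 -/
open Matrix

/-- Continuous functions additive on nonnegative reals are linear there. -/
private lemma cauchy_nonneg (h : ℝ → ℝ) (hc : Continuous h)
    (hadd : ∀ s t : ℝ, 0 ≤ s → 0 ≤ t → h (s + t) = h s + h t) :
    ∀ t : ℝ, 0 ≤ t → h t = t * h 1 := by
  have h0 : h 0 = 0 := by
    have := hadd 0 0 le_rfl le_rfl
    simp only [add_zero] at this
    linarith
  have hnat : ∀ (n : ℕ) (t : ℝ), 0 ≤ t → h ((n : ℝ) * t) = (n : ℝ) * h t := by
    intro n
    induction n with
    | zero => intro t ht; simpa using h0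
    | succ n ih =>
      intro t ht
      have e1 : ((n : ℝ) + 1) * t = (n : ℝ) * t + t := by ring
      push_cast
      rw [e1, hadd _ _ (by positivity) ht, ih t ht]
      ring
  have hfrac : ∀ (k n : ℕ), 0 < n → h ((k : ℝ) / (n : ℝ)) = ((k : ℝ) / (n : ℝ)) * h 1 := by
    intro k n hn
    have hn0 : (n : ℝ) ≠ 0 := by positivity
    have h1 : (n : ℝ) * ((k : ℝ) / (n : ℝ)) = (k : ℝ) := by field_simp
    have h2 := hnat n ((k : ℝ) / (n : ℝ)) (by positivity)
    rw [h1] at h2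
    have h3 := hnat k 1 zero_le_one
    rw [mul_one] at h3
    rw [h3] at h2
    have hgoal : (n : ℝ) * h ((k : ℝ) / (n : ℝ))
        = (n : ℝ) * (((k : ℝ) / (n : ℝ)) * h 1) := by
      rw [← h2, ← mul_assoc, h1]
    exact mul_left_cancel₀ hn0 hgoal
  have hrat : ∀ q : ℚ, 0 ≤ q → h ((q : ℝ)) = (q : ℝ) * h 1 := by
    intro q hq
    have hnum : ((q.num.toNat : ℕ) : ℝ) = ((q.num : ℤ) : ℝ) := by
      norm_cast
      exact Int.toNat_of_nonneg (Rat.num_nonneg.mpr hq)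
    have hcast : (q : ℝ) = ((q.num.toNat : ℕ) : ℝ) / ((q.den : ℕ) : ℝ) := by
      rw [hnum, Rat.cast_def]
    rw [hcast, hfrac _ _ q.pos]
  have hF : (fun t : ℝ => h (t * t)) = fun t : ℝ => t * t * h 1 := by
    apply Rat.denseRange_cast.equalizer
    · exact hc.comp (continuous_id.mul continuous_id)
    · exact (continuous_id.mul continuous_id).mul continuous_const
    · funext q
      have e : (q : ℝ) * (q : ℝ) = ((q * q : ℚ) : ℝ) := by push_cast; ring
      simp only [Function.comp_apply]
      rw [e, hrat (q * q) (mul_self_nonneg q)]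
  intro t ht
  have := congrFun hF (Real.sqrt t)
  rwa [Real.mul_self_sqrt ht] at this

section OrthAdd

variable {V : Type*} [AddCommGroup V] [Module ℝ V] [TopologicalSpace V]
  [IsTopologicalAddGroup V] [ContinuousSMul ℝ V]

/-- Axioms for a symmetric positive definite bilinear form with enough
orthogonal directions. -/
structure GoodForm (β : V → V → ℝ) : Prop where
  addl : ∀ x x' y, β (x + x') y = β x y + β x' y
  smull : ∀ (t : ℝ) (x y : V), β (t • x) y = t * β x y
  symm : ∀ x y, β x y = β y x
  pos : ∀ x, x ≠ 0 → 0 < β x x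
  perp0 : ∀ x y : V, ∃ z, z ≠ 0 ∧ β x z = 0 ∧ β y z = 0

set_option linter.unusedSectionVars false

variable {β : V → V → ℝ} (hβ : GoodForm β)

include hβ

private lemma GoodForm.addr (x y y' : V) : β x (y + y') = β x y + β x y' := by
  rw [hβ.symm, hβ.addl, hβ.symm y x, hβ.symm y' x]

private lemma GoodForm.smulr (t : ℝ) (x y : V) : β x (t • y) = t * β x y := by
  rw [hβ.symm, hβ.smull, hβ.symm y x]

private lemma GoodForm.zerol (y : V) : β 0 y = 0 := by
  have := hβ.smull 0 0 y
  simpa using this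

private lemma GoodForm.zeror (x : V) : β x 0 = 0 := by
  rw [hβ.symm]; exact hβ.zerol x

private lemma GoodForm.negl (x y : V) : β (-x) y = -β x y := by
  have := hβ.smull (-1) x y
  simpa using this

private lemma GoodForm.negr (x y : V) : β x (-y) = -β x y := by
  rw [hβ.symm, hβ.negl, hβ.symm]

private lemma GoodForm.subl (x x' y : V) : β (x - x') y = β x y - β x' y := by
  rw [sub_eq_add_neg, hβ.addl, hβ.negl]; ring

private lemma GoodForm.subr (x y y' : V) : β x (y - y') = β x y - β x y' := by
  rw [sub_eq_add_neg, hβ.addr, hβ.negr]; ring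

private lemma GoodForm.nonneg (x : V) : 0 ≤ β x x := by
  by_cases hx : x = 0
  · simp [hx, hβ.zerol]
  · exact (hβ.pos x hx).le

private lemma GoodForm.expand (x y : V) :
    β (x + y) (x + y) = β x x + β y y + 2 * β x y := by
  rw [hβ.addl, hβ.addr, hβ.addr, hβ.symm y x]; ring

/-- Orthogonal directions of prescribed squared norm exist. -/
private lemma GoodForm.perp (x y : V) (r : ℝ) (hr : 0 ≤ r) :
    ∃ w, β x w = 0 ∧ β y w = 0 ∧ β w w = r := by
  obtain ⟨z, hz0, hxz, hyz⟩ := hβ.perp0 x y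
  have hzz : 0 < β z z := hβ.pos z hz0
  refine ⟨Real.sqrt (r / β z z) • z, ?_, ?_, ?_⟩
  · rw [hβ.smulr, hxz, mul_zero]
  · rw [hβ.smulr, hyz, mul_zero]
  · rw [hβ.smull, hβ.smulr, ← mul_assoc,
      Real.mul_self_sqrt (div_nonneg hr hzz.le), div_mul_cancel₀ _ hzz.ne']

/-- Odd orthogonally additive functions are additive on pairs with
nonnegative pairing. -/
private lemma orth_add_nonneg (G : V → ℝ)
    (horth : ∀ x y, β x y = 0 → G (x + y) = G x + G y)
    (hodd : ∀ x, G (-x) = -G x) :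
    ∀ x y : V, 0 ≤ β x y → G (x + y) = G x + G y := by
  intro x y hxy
  obtain ⟨w, hxw, hyw, hww⟩ := hβ.perp x y (β x y) hxy
  have h1 : β (x + w) (y - w) = 0 := by
    rw [hβ.addl, hβ.subr, hβ.subr, hxw, hβ.symm w y, hyw, hww]
    ring
  have h2 : x + y = (x + w) + (y - w) := by abel
  have h3 : β y (-w) = 0 := by rw [hβ.negr, hyw, neg_zero]
  calc G (x + y) = G ((x + w) + (y - w)) := by rw [← h2]
    _ = G (x + w) + G (y - w) := horth _ _ h1
    _ = (G x + G w) + (G y + G (-w)) := by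
        rw [horth x w hxw, sub_eq_add_neg, horth y (-w) h3]
    _ = G x + G y := by rw [hodd]; ring

/-- Odd continuous orthogonally additive functions are homogeneous. -/
private lemma orth_odd_homog (G : V → ℝ) (hGc : Continuous G)
    (horth : ∀ x y, β x y = 0 → G (x + y) = G x + G y)
    (hodd : ∀ x, G (-x) = -G x) :
    ∀ (t : ℝ) (a : V), G (t • a) = t * G a := by
  have key : ∀ (a : V) (t : ℝ), 0 ≤ t → G (t • a) = t * G a := by
    intro a
    have hlin := cauchy_nonneg (fun t => G (t • a))
      (hGc.comp (continuous_id.smul continuous_const))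
      (by
        intro s t hs ht
        simp only [add_smul]
        exact orth_add_nonneg hβ G horth hodd _ _
          (by rw [hβ.smull, hβ.smulr]
              exact mul_nonneg hs (mul_nonneg ht (hβ.nonneg a))))
    intro t ht
    have := hlin t ht
    simpa [one_smul] using this
  intro t a
  rcases le_or_gt 0 t with ht | ht
  · exact key a t ht
  · have h1 : G (t • a) = -G ((-t) • a) := by
      rw [← hodd ((-t) • a), neg_smul, neg_neg]
    rw [h1, key a (-t) (by linarith)]
    ring

/-- Odd continuous orthogonally additive functions are fully additive. -/
private lemma orth_odd_additive (G : V → ℝ) (hGc : Continuous G)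
    (horth : ∀ x y, β x y = 0 → G (x + y) = G x + G y)
    (hodd : ∀ x, G (-x) = -G x) :
    ∀ x y : V, G (x + y) = G x + G y := by
  have hhom := orth_odd_homog hβ G hGc horth hodd
  intro x y
  by_cases hy : y = 0
  · have hG0 : G 0 = 0 := by
      have := hhom 0 0; simpa using this
    simp [hy, hG0]
  · have hyy : 0 < β y y := hβ.pos y hy
    set t : ℝ := β x y / β y y with hts
    have hperp : β (x - t • y) y = 0 := by
      rw [hβ.subl, hβ.smull, hts, div_mul_cancel₀ _ hyy.ne', sub_self]
    have e1 : x + y = (x - t • y) + (t + 1) • y := by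
      rw [add_smul, one_smul]; abel
    have e2 : x = (x - t • y) + t • y := by abel
    have h1 : G (x + y) = G (x - t • y) + (t + 1) * G y := by
      rw [e1, horth _ _ (by rw [hβ.smulr, hperp, mul_zero]), hhom]
    have h2 : G x = G (x - t • y) + t * G y := by
      conv_lhs => rw [e2]
      rw [horth _ _ (by rw [hβ.smulr, hperp, mul_zero]), hhom]
    linarith [h1, h2]

/-- Even orthogonally additive functions depend only on the squared norm. -/
private lemma orth_even_eq_of_norm (G : V → ℝ)
    (horth : ∀ x y, β x y = 0 → G (x + y) = G x + G y)
    (heven : ∀ x, G (-x) = G x) :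
    ∀ x y : V, β x x = β y y → G x = G y := by
  have key1 : ∀ x y : V, β x y = 0 → β x x = β y y →
      G ((2 : ℝ) • x) = 2 * G x + 2 * G y := by
    intro x y hp hq
    have hd : β (x + y) (x - y) = 0 := by
      rw [hβ.addl, hβ.subr, hβ.subr, hβ.symm y x, hp, hq]; ring
    have e1 : (2 : ℝ) • x = (x + y) + (x - y) := by
      rw [two_smul]; abel
    have h1 : G (x + y) = G x + G y := horth x y hp
    have h2 : G (x - y) = G x + G y := by
      rw [sub_eq_add_neg, horth x (-y) (by rw [hβ.negr, hp, neg_zero]), heven]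
    rw [e1, horth _ _ hd, h1, h2]; ring
  have key2 : ∀ x y : V, β x y = 0 → β x x = β y y → G x = G y := by
    intro x y hp hq
    have hsc : ∀ u : V, (2 : ℝ) • ((1 / 2 : ℝ) • u) = u := by
      intro u; rw [smul_smul]; norm_num
    have hp' : β ((1 / 2 : ℝ) • x) ((1 / 2 : ℝ) • y) = 0 := by
      rw [hβ.smull, hβ.smulr, hp]; ring
    have hq' : β ((1 / 2 : ℝ) • x) ((1 / 2 : ℝ) • x)
        = β ((1 / 2 : ℝ) • y) ((1 / 2 : ℝ) • y) := by
      rw [hβ.smull, hβ.smulr, hβ.smull, hβ.smulr, hq]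
    have a1 := key1 _ _ hp' hq'
    have a2 := key1 ((1 / 2 : ℝ) • y) ((1 / 2 : ℝ) • x)
      (by rw [hβ.symm] at hp'; exact hp') hq'.symm
    rw [hsc x] at a1
    rw [hsc y] at a2
    linarith
  intro x y hq
  obtain ⟨w, hxw, hyw, hww⟩ := hβ.perp x y (β x x) (hβ.nonneg x)
  have h1 : G x = G w := key2 x w hxw hww.symm
  have h2 : G y = G w := key2 y w hyw (by rw [hww, hq])
  rw [h1, h2]

/-- Characterization of continuous orthogonally additive functions:
linear plus a multiple of the quadratic form. -/
private lemma orth_add_char (G : V → ℝ) (hGc : Continuous G)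
    (horth : ∀ x y, β x y = 0 → G (x + y) = G x + G y) :
    ∃ (δ : ℝ) (L : V →ₗ[ℝ] ℝ), ∀ x, G x = L x + δ * β x x := by
  set Go : V → ℝ := fun x => (G x - G (-x)) / 2 with hGo
  set Ge : V → ℝ := fun x => (G x + G (-x)) / 2 with hGe
  have hnegorth : ∀ x y : V, β x y = 0 → G (-(x + y)) = G (-x) + G (-y) := by
    intro x y hxy
    have : β (-x) (-y) = 0 := by rw [hβ.negl, hβ.negr, hxy]; ring
    rw [neg_add]
    exact horth _ _ this
  have hGoorth : ∀ x y, β x y = 0 → Go (x + y) = Go x + Go y := by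
    intro x y hxy
    simp only [hGo]
    rw [horth x y hxy, hnegorth x y hxy]; ring
  have hGeorth : ∀ x y, β x y = 0 → Ge (x + y) = Ge x + Ge y := by
    intro x y hxy
    simp only [hGe]
    rw [horth x y hxy, hnegorth x y hxy]; ring
  have hGoc : Continuous Go := ((hGc.sub (hGc.comp continuous_neg)).div_const 2)
  have hGec : Continuous Ge := ((hGc.add (hGc.comp continuous_neg)).div_const 2)
  have hGoodd : ∀ x, Go (-x) = -Go x := by
    intro x; simp only [hGo, neg_neg]; ring
  have hGeeven : ∀ x, Ge (-x) = Ge x := by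
    intro x; simp only [hGe, neg_neg]; ring
  -- odd part: linear
  have hGoadd := orth_odd_additive hβ Go hGoc hGoorth hGoodd
  have hGohom := orth_odd_homog hβ Go hGoc hGoorth hGoodd
  set L : V →ₗ[ℝ] ℝ :=
    { toFun := Go
      map_add' := hGoadd
      map_smul' := fun t x => by simp [hGohom t x, smul_eq_mul] } with hL
  -- even part
  obtain ⟨u₀, -, -, hu₀⟩ := hβ.perp 0 0 1 zero_le_one
  obtain ⟨v, hv1, -, hvv⟩ := hβ.perp u₀ u₀ 1 zero_le_one
  set φ : ℝ → ℝ := fun s => Ge (Real.sqrt s • u₀) with hφ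
  have hφx : ∀ x : V, Ge x = φ (β x x) := by
    intro x
    apply orth_even_eq_of_norm hβ Ge hGeorth hGeeven
    rw [hβ.smull, hβ.smulr, hu₀, ← mul_assoc, Real.mul_self_sqrt (hβ.nonneg x), mul_one]
  have hφc : Continuous φ :=
    hGec.comp (Real.continuous_sqrt.smul continuous_const)
  have hφadd : ∀ s t : ℝ, 0 ≤ s → 0 ≤ t → φ (s + t) = φ s + φ t := by
    intro s t hs ht
    set x : V := Real.sqrt s • u₀ with hx
    set y : V := Real.sqrt t • v with hy
    have hxy : β x y = 0 := by
      rw [hx, hy, hβ.smull, hβ.smulr, hv1]; ring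
    have hxx : β x x = s := by
      rw [hx, hβ.smull, hβ.smulr, hu₀, ← mul_assoc, Real.mul_self_sqrt hs, mul_one]
    have hyy : β y y = t := by
      rw [hy, hβ.smull, hβ.smulr, hvv, ← mul_assoc, Real.mul_self_sqrt ht, mul_one]
    have hsum : β (x + y) (x + y) = s + t := by
      rw [hβ.expand, hxx, hyy, hxy]; ring
    have e1 : φ (s + t) = Ge (x + y) := by rw [hφx (x + y), hsum]
    have e2 : Ge x = φ s := by rw [hφx x, hxx]
    have e3 : Ge y = φ t := by rw [hφx y, hyy]
    rw [e1, hGeorth x y hxy, e2, e3]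
  have hφlin := cauchy_nonneg φ hφc hφadd
  refine ⟨φ 1, L, fun x => ?_⟩
  have hsplit : G x = Go x + Ge x := by simp only [hGo, hGe]; ring
  rw [hsplit, hφx x, hφlin (β x x) (hβ.nonneg x)]
  show Go x + β x x * φ 1 = Go x + φ 1 * β x x
  ring

end OrthAdd

/-- Maxwellian characterization (Theorem 3.7): a continuous positive one-particle
distribution satisfies the detailed-balance identity
`f(p₁,ς₁) f(p₂,ς₂) = f(p₁',ς₁') f(p₂',ς₂')` on the collision manifold determined
by conservation of linear momentum, conjugate order-parameter momentum, and
kinetic energy, if and only if it is a Maxwellian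
`f = exp(a + b·p + c·ς + δ E(p,ς))`. -/
theorem maxwellian_characterization
    (m : ℝ) (hm : 0 < m)
    (B : Matrix (Fin 3) (Fin 3) ℝ)
    (hBsym : Bᵀ = B)
    (hBpos : ∀ x : Fin 3 → ℝ, x ≠ 0 → 0 < x ⬝ᵥ B.mulVec x)
    (E : (Fin 3 → ℝ) → (Fin 3 → ℝ) → ℝ)
    (hE : ∀ p ς, E p ς = m⁻¹ * (p ⬝ᵥ p) + ς ⬝ᵥ B⁻¹.mulVec ς)
    (f : (Fin 3 → ℝ) × (Fin 3 → ℝ) → ℝ)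
    (hfcont : Continuous f)
    (hfpos : ∀ q, 0 < f q) :
    (∀ p₁ ς₁ p₂ ς₂ p₁' ς₁' p₂' ς₂' : Fin 3 → ℝ,
      p₁ + p₂ = p₁' + p₂' → ς₁ + ς₂ = ς₁' + ς₂' →
      E p₁ ς₁ + E p₂ ς₂ = E p₁' ς₁' + E p₂' ς₂' →
      f (p₁, ς₁) * f (p₂, ς₂) = f (p₁', ς₁') * f (p₂', ς₂'))
    ↔ ∃ (a δ : ℝ) (b c : Fin 3 → ℝ), ∀ p ς : Fin 3 → ℝ,
        f (p, ς) = Real.exp (a + b ⬝ᵥ p + c ⬝ᵥ ς + δ * E p ς) := by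
  classical
  -- the positive definite bilinear form on phase space
  obtain ⟨β, hβdef⟩ : ∃ β : ((Fin 3 → ℝ) × (Fin 3 → ℝ)) → ((Fin 3 → ℝ) × (Fin 3 → ℝ)) → ℝ,
      β = fun x y => m⁻¹ * (x.1 ⬝ᵥ y.1) + x.2 ⬝ᵥ B⁻¹.mulVec y.2 := ⟨_, rfl⟩
  -- positivity facts
  have hBherm : B.IsHermitian := by
    have hs : ∀ i j, B j i = B i j := fun i j => congrFun (congrFun hBsym i) j
    ext i j
    simp [Matrix.conjTranspose_apply, hs j i]
  have hBpd : B.PosDef := Matrix.PosDef.of_dotProduct_mulVec_pos hBherm fun x hx => by simpa using hBpos x hx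
  have hBinv_pos : ∀ z : Fin 3 → ℝ, z ≠ 0 → 0 < z ⬝ᵥ B⁻¹.mulVec z := by
    intro z hz
    simpa using hBpd.inv.dotProduct_mulVec_pos hz
  have hBinv_nonneg : ∀ z : Fin 3 → ℝ, 0 ≤ z ⬝ᵥ B⁻¹.mulVec z := by
    intro z
    by_cases hz : z = 0
    · simp [hz]
    · exact (hBinv_pos z hz).le
  have hdot_nonneg : ∀ p : Fin 3 → ℝ, 0 ≤ p ⬝ᵥ p :=
    fun p => Finset.sum_nonneg fun i _ => mul_self_nonneg (p i)
  have hdot_pos : ∀ p : Fin 3 → ℝ, p ≠ 0 → 0 < p ⬝ᵥ p := by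
    intro p hp
    obtain ⟨i, hi⟩ := Function.ne_iff.mp hp
    exact Finset.sum_pos' (fun j _ => mul_self_nonneg (p j))
      ⟨i, Finset.mem_univ i, mul_self_pos.mpr hi⟩
  -- right linearity of β (needed to build the kernel argument)
  have hβaddr : ∀ x y y', β x (y + y') = β x y + β x y' := by
    intro x y y'
    simp only [hβdef, Prod.fst_add, Prod.snd_add, dotProduct_add, Matrix.mulVec_add]
    ring
  have hβsmulr : ∀ (t : ℝ) x y, β x (t • y) = t * β x y := by
    intro t x y
    simp only [hβdef, Prod.smul_fst, Prod.smul_snd, dotProduct_smul, Matrix.mulVec_smul,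
      smul_eq_mul]
    ring
  -- β is a good form
  have hGF : GoodForm β := by
    constructor
    · intro x x' y
      simp only [hβdef, Prod.fst_add, Prod.snd_add, add_dotProduct]
      ring
    · intro t x y
      simp only [hβdef, Prod.smul_fst, Prod.smul_snd, smul_dotProduct, smul_eq_mul]
      ring
    · intro x y
      have hBit : (B⁻¹)ᵀ = B⁻¹ := by rw [Matrix.transpose_nonsing_inv, hBsym]
      have key : ∀ u w : Fin 3 → ℝ, u ⬝ᵥ B⁻¹.mulVec w = w ⬝ᵥ B⁻¹.mulVec u := by
        intro u w
        rw [Matrix.dotProduct_mulVec, ← Matrix.mulVec_transpose, hBit]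
        exact dotProduct_comm _ _
      simp only [hβdef]
      rw [dotProduct_comm x.1 y.1, key x.2 y.2]
    · intro x hx
      simp only [hβdef]
      by_cases h1 : x.1 = 0
      · have h2 : x.2 ≠ 0 := by
          intro h2
          exact hx (Prod.ext_iff.mpr ⟨by simpa using h1, by simpa using h2⟩)
        have hp2 := hBinv_pos x.2 h2
        have hnn : 0 ≤ m⁻¹ * (x.1 ⬝ᵥ x.1) :=
          mul_nonneg (inv_nonneg.mpr hm.le) (hdot_nonneg _)
        linarith
      · have hp1 : 0 < m⁻¹ * (x.1 ⬝ᵥ x.1) := mul_pos (inv_pos.mpr hm) (hdot_pos _ h1)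
        linarith [hBinv_nonneg x.2]
    · intro x y
      by_contra hcon
      push_neg at hcon
      set L2 : ((Fin 3 → ℝ) × (Fin 3 → ℝ)) →ₗ[ℝ] ℝ × ℝ :=
        { toFun := fun z => (β x z, β y z)
          map_add' := fun z z' => by
            simp only [hβaddr, Prod.mk_add_mk]
          map_smul' := fun t z => by
            simp only [hβsmulr, Prod.smul_mk, smul_eq_mul, RingHom.id_apply] } with hL2
      have hker : LinearMap.ker L2 = ⊥ := by
        rw [LinearMap.ker_eq_bot']
        intro z hz
        by_contra hz0
        have h1 : β x z = 0 := congrArg Prod.fst hz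
        have h2 : β y z = 0 := congrArg Prod.snd hz
        exact hcon z hz0 h1 h2
      have hinj : Function.Injective L2 := LinearMap.ker_eq_bot.mp hker
      have hle := LinearMap.finrank_le_finrank_of_injective hinj
      simp at hle
  -- E is the quadratic form of β
  have hEβ : ∀ p ς : Fin 3 → ℝ, E p ς = β (p, ς) (p, ς) := by
    intro p ς
    rw [hE]
    simp only [hβdef]
  have hxE : ∀ z : (Fin 3 → ℝ) × (Fin 3 → ℝ), E z.1 z.2 = β z z := fun z => hEβ z.1 z.2
  constructor
  · -- forward direction
    intro hcol
    have hE00 : E 0 0 = 0 := by simp [hE]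
    have hcol0 : ∀ x y : (Fin 3 → ℝ) × (Fin 3 → ℝ), β x y = 0 →
        f (x + y) * f 0 = f x * f y := by
      intro x y hxy
      have henergy : E (x.1 + y.1) (x.2 + y.2) + E 0 0 = E x.1 x.2 + E y.1 y.2 := by
        have e1 : E (x.1 + y.1) (x.2 + y.2) = β (x + y) (x + y) := hxE (x + y)
        rw [e1, hE00, hGF.expand x y, hxy, hxE x, hxE y]
        ring
      have hres := hcol (x.1 + y.1) (x.2 + y.2) 0 0 x.1 x.2 y.1 y.2
        (add_zero _) (add_zero _) henergy
      exact hres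
    have hgc : Continuous (fun q => Real.log (f q)) :=
      hfcont.log fun q => (hfpos q).ne'
    obtain ⟨G, hGdef⟩ : ∃ G : ((Fin 3 → ℝ) × (Fin 3 → ℝ)) → ℝ,
        G = fun q => Real.log (f q) - Real.log (f 0) := ⟨_, rfl⟩
    have hGc : Continuous G := by rw [hGdef]; exact hgc.sub continuous_const
    have horth : ∀ x y, β x y = 0 → G (x + y) = G x + G y := by
      intro x y hxy
      have hlog := congrArg Real.log (hcol0 x y hxy)
      rw [Real.log_mul (hfpos _).ne' (hfpos _).ne',
        Real.log_mul (hfpos _).ne' (hfpos _).ne'] at hlog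
      simp only [hGdef]
      linarith [hlog]
    obtain ⟨δ, L, hGL⟩ := orth_add_char hGF G hGc horth
    have hsum1 : ∀ q : Fin 3 → ℝ, ∑ i, q i • (Pi.single i 1 : Fin 3 → ℝ) = q := by
      intro q
      have hsingle : ∀ i, q i • (Pi.single i 1 : Fin 3 → ℝ) = Pi.single i (q i) := by
        intro i
        ext j
        by_cases h : j = i <;> simp [Pi.single_apply, h]
      simp_rw [hsingle]
      exact Finset.univ_sum_single q
    have hLbc : ∀ p ς : Fin 3 → ℝ,
        L (p, ς) = (fun i => L (Pi.single i 1, 0)) ⬝ᵥ p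
          + (fun i => L (0, Pi.single i 1)) ⬝ᵥ ς := by
      intro p ς
      have hdecomp : ((p, ς) : (Fin 3 → ℝ) × (Fin 3 → ℝ))
          = (∑ i, p i • ((Pi.single i 1 : Fin 3 → ℝ), (0 : Fin 3 → ℝ)))
            + ∑ i, ς i • ((0 : Fin 3 → ℝ), (Pi.single i 1 : Fin 3 → ℝ)) := by
        rw [Prod.ext_iff]
        constructor
        · simp [Prod.fst_sum, Prod.smul_mk, hsum1]
        · simp [Prod.snd_sum, Prod.smul_mk, hsum1]
      rw [hdecomp, map_add, map_sum, map_sum]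
      simp_rw [_root_.map_smul, smul_eq_mul]
      simp [dotProduct, mul_comm]
    refine ⟨Real.log (f 0), δ, fun i => L (Pi.single i 1, 0),
      fun i => L (0, Pi.single i 1), fun p ς => ?_⟩
    have hGval := hGL (p, ς)
    rw [hLbc p ς] at hGval
    simp only [hGdef] at hGval
    have hfe : f (p, ς) = Real.exp (Real.log (f (p, ς))) := (Real.exp_log (hfpos _)).symm
    rw [hfe]
    congr 1
    rw [hEβ p ς]
    linarith [hGval]
  · -- converse: Maxwellians satisfy detailed balance
    rintro ⟨a, δ, b, c, hform⟩ p₁ ς₁ p₂ ς₂ p₁' ς₁' p₂' ς₂' hp hς hEe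
    rw [hform, hform, hform, hform, ← Real.exp_add, ← Real.exp_add]
    congr 1
    have hbb : b ⬝ᵥ p₁ + b ⬝ᵥ p₂ = b ⬝ᵥ p₁' + b ⬝ᵥ p₂' := by
      rw [← dotProduct_add, ← dotProduct_add, hp]
    have hcc : c ⬝ᵥ ς₁ + c ⬝ᵥ ς₂ = c ⬝ᵥ ς₁' + c ⬝ᵥ ς₂' := by
      rw [← dotProduct_add, ← dotProduct_add, hς]
    have hdE : δ * E p₁ ς₁ + δ * E p₂ ς₂ = δ * E p₁' ς₁' + δ * E p₂' ς₂' := by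
      rw [← mul_add, ← mul_add, hEe]
    linarith
end
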